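/- arXiv:2107.11148 — 6 statements merged into one kernel-verified Lean document; each statement's English description precedes it below -/
import Mathlib

section
/- Let ζ = z·conj(w) with ζ ∈ ℂ ∖ (E_sz ∪ {1}) and set ρ = |ζ·e^{1−ζ}|. Then (i) ρ ≤ 1, and (ii) for every η > 0 there is a constant C such that for all positive integers n and all z, w ∈ ℂ with ζ = z·conj(w) ∈ ℂ ∖ E_sz and |ζ − 1| ≥ η, one has K_n(z,w) = n·exp(n·z·conj(w) − n|z|²/2 − n|w|²/2)·(1 + r_n(z,w)) with |r_n(z,w)| ≤ C·ρ^n/√n. -/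
set_option maxHeartbeats 1000000


open Complex

/-- The Ginibre kernel `K_n(z,w) = n·(∑_{j<n} (n z w̄)^j/j!)·exp(−n|z|²/2 − n|w|²/2)`. -/
noncomputable def ginibreK (n : ℕ) (z w : ℂ) : ℂ :=
  (n : ℂ) * (∑ j ∈ Finset.range n, ((n : ℂ) * z * (starRingEnd ℂ) w) ^ j / (Nat.factorial j : ℂ)) *
    Complex.exp (-((n : ℂ) * ((‖z‖ ^ 2 : ℝ) : ℂ) / 2)
      - (n : ℂ) * ((‖w‖ ^ 2 : ℝ) : ℂ) / 2)

/-- The Szegő curve `γ_sz = {z : |z| ≤ 1, |z e^{1−z}| = 1}`. -/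
def szegoCurve : Set ℂ :=
  {z : ℂ | ‖z‖ ≤ 1 ∧ ‖z * Complex.exp (1 - z)‖ = 1}

/-- The exterior Szegő domain: the connected component of `ℂ ∖ γ_sz` containing `2`
(the unbounded component). -/
def extSzego : Set ℂ := connectedComponentIn szegoCurveᶜ (2 : ℂ)


namespace BulkAux

noncomputable def g (ζ : ℂ) : ℝ := Real.log (‖ζ‖) + 1 - ζ.re

lemma abs_formula (ζ : ℂ) :
    ‖(ζ * Complex.exp (1 - ζ))‖ = ‖ζ‖ * Real.exp (1 - ζ.re) := by
  rw [norm_mul, Complex.norm_exp]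
  simp

lemma notCurve {ζ : ℂ} (h : 1 < ‖ζ‖ ∨ (ζ ≠ 0 ∧ 0 < g ζ)) : ζ ∈ szegoCurveᶜ := by
  intro hc
  obtain ⟨h1, h2⟩ := hc
  rw [abs_formula] at h2
  rcases h with h | ⟨hz, hg⟩
  · exact absurd h1 (not_le.2 h)
  · have ht : 0 < ‖ζ‖ := by simpa [norm_pos_iff] using hz
    have : Real.log (‖ζ‖ * Real.exp (1 - ζ.re)) = 0 := by rw [h2]; simp
    rw [Real.log_mul (ne_of_gt ht) (Real.exp_ne_zero _), Real.log_exp] at this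
    unfold g at hg; linarith

lemma joinedIn_of {x y : ℂ} (F : Set ℂ) (f : ℝ → ℂ) (hf : Continuous f)
    (h0 : f 0 = x) (h1 : f 1 = y) (hm : ∀ s : ℝ, 0 ≤ s → s ≤ 1 → f s ∈ F) :
    JoinedIn F x y :=
  ⟨⟨⟨fun s => f s, hf.comp continuous_subtype_val⟩, h0, h1⟩,
    fun t => hm t t.2.1 t.2.2⟩

lemma joined_to_ext {x y : ℂ} (h : JoinedIn szegoCurveᶜ x y) (hx : x ∈ extSzego) :
    y ∈ extSzego := by
  obtain ⟨γ, hγ⟩ := h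
  have hsub : Set.range γ ⊆ connectedComponentIn szegoCurveᶜ x :=
    (isPreconnected_range γ.continuous).subset_connectedComponentIn
      ⟨0, γ.source⟩ (Set.range_subset_iff.2 hγ)
  have hy : y ∈ connectedComponentIn szegoCurveᶜ x := hsub ⟨1, γ.target⟩
  unfold extSzego at hx ⊢
  rwa [connectedComponentIn_eq hx]

lemma two_mem_ext : (2 : ℂ) ∈ extSzego :=
  mem_connectedComponentIn (by
    apply notCurve; left; simp)

lemma A_subset {a : ℂ} (ha : 1 < ‖a‖) : a ∈ extSzego := by
  set t := ‖a‖ with htdef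
  have ht : 0 < t := lt_trans one_pos ha
  have hj1 : JoinedIn {ζ : ℂ | 1 < ‖ζ‖} (2 : ℂ) (((2 / t : ℝ) : ℂ) * a) := by
    have hrank : 1 < Module.rank ℝ ℂ := by rw [Complex.rank_real_complex]; norm_num
    have hsph : IsPathConnected (Metric.sphere (0 : ℂ) 2) :=
      isPathConnected_sphere hrank 0 (by norm_num)
    have h2 : (2 : ℂ) ∈ Metric.sphere (0 : ℂ) 2 := by
      simp [Complex.dist_eq]
    have hb : (((2 / t : ℝ) : ℂ) * a) ∈ Metric.sphere (0 : ℂ) 2 := by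
      simp only [Metric.mem_sphere, Complex.dist_eq, sub_zero, norm_mul, Complex.norm_real, Real.norm_eq_abs]
      rw [abs_of_pos (by positivity : (0:ℝ) < 2 / t)]
      field_simp
      exact htdef.symm
    exact (hsph.joinedIn _ h2 _ hb).mono (fun ζ hζ => by
      simp only [Metric.mem_sphere, Complex.dist_eq, sub_zero] at hζ
      simp only [Set.mem_setOf_eq, hζ]; norm_num)
  have hj2 : JoinedIn {ζ : ℂ | 1 < ‖ζ‖} (((2 / t : ℝ) : ℂ) * a) a := by
    refine joinedIn_of _ (fun s => (((1 - s) * (2 / t) + s : ℝ) : ℂ) * a)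
      (by fun_prop) (by norm_num) (by norm_num) ?_
    intro s h0 h1
    simp only [Set.mem_setOf_eq, norm_mul, Complex.norm_real, Real.norm_eq_abs, ← htdef]
    have hc : min (2 / t) 1 ≤ (1 - s) * (2 / t) + s := by
      rcases le_total (2 / t) 1 with h | h
      · rw [min_eq_left h]; nlinarith [mul_nonneg h0 (sub_nonneg.2 h)]
      · rw [min_eq_right h]
        nlinarith [mul_nonneg (by linarith : (0:ℝ) ≤ 1 - s) (by linarith : (0:ℝ) ≤ 2 / t - 1)]
    have hpos : 0 < (1 - s) * (2 / t) + s := by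
      have : (0:ℝ) < min (2 / t) 1 := lt_min (by positivity) one_pos
      linarith
    rw [abs_of_pos hpos]
    have : min (2 / t) 1 * t ≤ ((1 - s) * (2 / t) + s) * t := by nlinarith
    have hmin : min 2 t ≤ min (2 / t) 1 * t := by
      rcases le_total (2 / t) 1 with h | h
      · rw [min_eq_left h]
        have : 2 / t * t = 2 := by field_simp
        rw [this]; exact min_le_left _ _
      · rw [min_eq_right h, one_mul]; exact min_le_right _ _
    have h2t : 1 < min 2 t := lt_min (by norm_num) ha
    linarith
  have := (hj1.trans hj2).mono (fun ζ hζ => notCurve (Or.inl hζ))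
  exact joined_to_ext this two_mem_ext

lemma cos_lt_one_of_arg {θ : ℝ} (hne : θ ≠ 0) (hlo : -Real.pi < θ) (hhi : θ ≤ Real.pi) :
    Real.cos θ < 1 := by
  rcases hne.lt_or_gt with h | h
  · have := Real.cos_lt_cos_of_nonneg_of_le_pi (le_refl 0) (by linarith : -θ ≤ Real.pi)
      (by linarith : (0:ℝ) < -θ)
    rw [Real.cos_neg] at this; simpa using this
  · have := Real.cos_lt_cos_of_nonneg_of_le_pi (le_refl 0) hhi h
    simpa using this

lemma exp_neg_pi_mul_I : Complex.exp (((-Real.pi : ℝ) : ℂ) * Complex.I) = -1 := by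
  push_cast
  rw [neg_mul, Complex.exp_neg, Complex.exp_pi_mul_I]
  norm_num

lemma B_subset {ζ : ℂ} (hz : ζ ≠ 0) (hg : 0 < g ζ) : ζ ∈ extSzego := by
  set B : Set ℂ := {ξ : ℂ | ξ ≠ 0 ∧ 0 < g ξ} with hB
  set t := ‖ζ‖ with htdef
  set θ := Complex.arg ζ with hθdef
  have ht : 0 < t := norm_pos_iff.2 hz
  have harg : θ ∈ Set.Ioc (-Real.pi) Real.pi := Complex.arg_mem_Ioc ζ
  have hre : ζ.re = t * Real.cos θ := by
    have := Complex.cos_arg hz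
    rw [← hθdef, ← htdef] at this
    field_simp at this ⊢
    linarith [this]
  have hgz : 0 < Real.log t + 1 - t * Real.cos θ := by
    unfold g at hg; rw [hre] at hg; exact hg
  have hθ0 : θ ≠ 0 := by
    intro h
    rw [h, Real.cos_zero, mul_one] at hgz
    have := Real.log_le_sub_one_of_pos ht
    linarith
  have hcos : Real.cos θ < 1 := cos_lt_one_of_arg hθ0 harg.1 harg.2
  have hcirc : ∀ φ : ℝ, Real.cos φ < 1 → Complex.exp ((φ:ℂ) * Complex.I) ∈ B := by
    intro φ hφ
    refine ⟨Complex.exp_ne_zero _, ?_⟩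
    have h1 : ‖(Complex.exp ((φ:ℂ) * Complex.I))‖ = 1 := by
      rw [Complex.norm_exp]; simp
    have h2 : (Complex.exp ((φ:ℂ) * Complex.I)).re = Real.cos φ := by
      rw [Complex.exp_mul_I]; simp [Complex.cos_ofReal_re]
    unfold g
    rw [h1, h2, Real.log_one]; linarith
  have hJ1 : JoinedIn B ζ (Complex.exp ((θ:ℂ) * Complex.I)) := by
    refine joinedIn_of _ (fun s => (((1-s)*t + s : ℝ):ℂ) * Complex.exp ((θ:ℂ)*Complex.I))
      (by fun_prop) ?_ ?_ ?_
    · show (((1-(0:ℝ))*t + 0 : ℝ):ℂ) * Complex.exp ((θ:ℂ)*Complex.I) = ζ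
      norm_num
      exact Complex.norm_mul_exp_arg_mul_I ζ
    · norm_num
    · intro s h0 h1
      show (((1-s)*t + s : ℝ):ℂ) * Complex.exp ((θ:ℂ)*Complex.I) ∈ B
      have hrpos : 0 < (1-s)*t + s := by
        rcases eq_or_lt_of_le h0 with h | h
        · rw [← h]; simpa using ht
        · nlinarith [mul_nonneg (by linarith : (0:ℝ) ≤ 1-s) ht.le]
      have habs : ‖((((1-s)*t+s : ℝ):ℂ) * Complex.exp ((θ:ℂ)*Complex.I))‖
          = (1-s)*t + s := by
        rw [norm_mul, Complex.norm_real, Real.norm_eq_abs, Complex.norm_exp]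
        simp [abs_of_pos hrpos]
      refine ⟨?_, ?_⟩
      · intro h
        have := congrArg norm h
        rw [habs] at this; simp at this; linarith
      · have hre2 : ((((1-s)*t+s : ℝ):ℂ) * Complex.exp ((θ:ℂ)*Complex.I)).re
            = ((1-s)*t + s) * Real.cos θ := by
          rw [Complex.exp_mul_I]
          simp [Complex.mul_re, Complex.cos_ofReal_re, Complex.sin_ofReal_re]
        unfold g
        rw [habs, hre2]
        have hlog : (1-s) * Real.log t + s * Real.log 1 ≤ Real.log ((1-s)*t + s*1) := by
          have := strictConcaveOn_log_Ioi.concaveOn.2 (Set.mem_Ioi.mpr ht)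
            (Set.mem_Ioi.mpr one_pos) (by linarith : (0:ℝ) ≤ 1 - s) h0 (by ring)
          simpa [smul_eq_mul] using this
        rw [Real.log_one, mul_zero, add_zero, mul_one] at hlog
        rcases lt_or_eq_of_le h1 with hs | hs
        · nlinarith [mul_pos (by linarith : (0:ℝ) < 1 - s) hgz,
            mul_nonneg h0 (by linarith : (0:ℝ) ≤ 1 - Real.cos θ)]
        · subst hs; norm_num; linarith
  have hJ2 : JoinedIn B (Complex.exp ((θ:ℂ) * Complex.I)) (-1 : ℂ) := by
    rcases hθ0.lt_or_gt with hθ | hθ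
    · refine joinedIn_of _
        (fun s => Complex.exp ((((1-s)*θ + s*(-Real.pi) : ℝ) : ℂ) * Complex.I))
        (by fun_prop) (by norm_num) ?_ ?_
      · show Complex.exp ((((1-(1:ℝ))*θ + 1*(-Real.pi) : ℝ) : ℂ) * Complex.I) = -1
        norm_num
      · intro s h0 h1
        apply hcirc
        have h1' : (1-s)*θ + s*(-Real.pi) ≤ θ := by nlinarith [harg.1]
        have h2' : -Real.pi ≤ (1-s)*θ + s*(-Real.pi) := by nlinarith [harg.1]
        have h3' : 0 < -((1-s)*θ + s*(-Real.pi)) := by linarith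
        have := Real.cos_lt_cos_of_nonneg_of_le_pi (le_refl 0)
          (by linarith : -((1-s)*θ + s*(-Real.pi)) ≤ Real.pi) h3'
        rw [Real.cos_neg] at this; simpa using this
    · refine joinedIn_of _
        (fun s => Complex.exp ((((1-s)*θ + s*Real.pi : ℝ) : ℂ) * Complex.I))
        (by fun_prop) (by norm_num) ?_ ?_
      · show Complex.exp ((((1-(1:ℝ))*θ + 1*Real.pi : ℝ) : ℂ) * Complex.I) = -1
        norm_num
      · intro s h0 h1
        apply hcirc
        have h1' : θ ≤ (1-s)*θ + s*Real.pi := by nlinarith [harg.2]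
        have h2' : (1-s)*θ + s*Real.pi ≤ Real.pi := by nlinarith [harg.2]
        have := Real.cos_lt_cos_of_nonneg_of_le_pi (le_refl 0) h2'
          (by linarith : (0:ℝ) < (1-s)*θ + s*Real.pi)
        simpa using this
  have hJ3 : JoinedIn B (-1 : ℂ) (-2 : ℂ) := by
    refine joinedIn_of _ (fun s => ((-(1+s) : ℝ):ℂ)) (by fun_prop) (by norm_num) (by norm_num) ?_
    intro s h0 h1
    show ((-(1+s) : ℝ):ℂ) ∈ B
    have habs : ‖((-(1+s) : ℝ):ℂ)‖ = 1+s := by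
      rw [Complex.norm_real, Real.norm_eq_abs, abs_of_nonpos (by linarith)]; ring
    refine ⟨?_, ?_⟩
    · intro h
      have := congrArg norm h
      rw [habs] at this; simp at this; linarith
    · unfold g
      rw [habs]
      have hre3 : ((-(1+s):ℝ):ℂ).re = -(1+s) := by simp
      rw [hre3]
      have := Real.log_nonneg (by linarith : (1:ℝ) ≤ 1+s)
      linarith
  have hJ : JoinedIn B ζ (-2 : ℂ) := hJ1.trans (hJ2.trans hJ3)
  have hmono : JoinedIn szegoCurveᶜ ζ (-2 : ℂ) :=
    hJ.mono (fun ξ hξ => notCurve (Or.inr hξ))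
  have hm2 : (-2 : ℂ) ∈ extSzego := A_subset (by simp)
  exact joined_to_ext hmono.symm hm2

lemma not_ext {ζ : ℂ} (hζ : ζ ∉ extSzego) :
    ‖ζ‖ ≤ 1 ∧ (ζ = 0 ∨ g ζ ≤ 0) := by
  constructor
  · by_contra h; exact hζ (A_subset (not_le.1 h))
  · by_contra h
    push_neg at h
    exact hζ (B_subset h.1 h.2)

lemma rho_le_one {ζ : ℂ} (hζ : ζ ∉ extSzego) :
    ‖(ζ * Complex.exp (1 - ζ))‖ ≤ 1 := by
  obtain ⟨h1, h2⟩ := not_ext hζ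
  rw [abs_formula]
  rcases h2 with h | h
  · simp [h]
  · rcases eq_or_lt_of_le (norm_nonneg ζ) with h0 | h0
    · rw [← h0]; simp
    · have hlg : Real.log (‖ζ‖) + (1 - ζ.re) ≤ 0 := by unfold g at h; linarith
      calc ‖ζ‖ * Real.exp (1 - ζ.re)
          = Real.exp (Real.log (‖ζ‖) + (1 - ζ.re)) := by
            rw [Real.exp_add, Real.exp_log h0]
        _ ≤ Real.exp 0 := Real.exp_le_exp.2 hlg
        _ = 1 := Real.exp_zero

lemma factorial_lb {n : ℕ} (hn : 1 ≤ n) :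
    Real.sqrt n * ((n : ℝ) / Real.exp 1) ^ n ≤ (Nat.factorial n : ℝ) := by
  have hnpos : (0:ℝ) < (n:ℝ) := by exact_mod_cast hn
  have hpos : (0:ℝ) < Real.sqrt (2 * n) * ((n : ℝ) / Real.exp 1) ^ n := by positivity
  have h1 : 1 ≤ Stirling.stirlingSeq n := by
    rcases n with _ | m
    · omega
    · have hten : Filter.Tendsto (Stirling.stirlingSeq ∘ Nat.succ) Filter.atTop
          (nhds (Real.sqrt Real.pi)) :=
        Stirling.tendsto_stirlingSeq_sqrt_pi.comp (Filter.tendsto_add_atTop_nat 1)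
      have hm := Stirling.stirlingSeq'_antitone.le_of_tendsto hten m
      have hπ : (1:ℝ) ≤ Real.sqrt Real.pi :=
        Real.one_le_sqrt.2 (by linarith [Real.pi_gt_three])
      exact le_trans hπ hm
  have h2 : Real.sqrt (2 * n) * ((n : ℝ) / Real.exp 1) ^ n ≤ (Nat.factorial n : ℝ) := by
    have := (one_le_div hpos).1 (by simpa [Stirling.stirlingSeq] using h1)
    exact this
  have h3 : Real.sqrt n ≤ Real.sqrt (2 * n) := Real.sqrt_le_sqrt (by linarith)
  have h4 : (0:ℝ) ≤ ((n : ℝ) / Real.exp 1) ^ n := by positivity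
  nlinarith [mul_le_mul_of_nonneg_right h3 h4]

lemma key_bound {n : ℕ} (hn : 1 ≤ n) {ζ : ℂ} {δ : ℝ} (hδ0 : 0 < δ) (hδ1 : δ ≤ 1)
    (htδ : ‖ζ‖ ≤ 1 - δ) :
    ‖((∑ j ∈ Finset.range n, ((n:ℂ)*ζ)^j / (Nat.factorial j : ℂ))
        * Complex.exp (-((n:ℂ)*ζ)) - 1)‖
      ≤ δ⁻¹ * ‖(ζ * Complex.exp (1 - ζ))‖ ^ n / Real.sqrt n := by
  have hnpos : (0:ℝ) < (n:ℝ) := by exact_mod_cast hn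
  set x : ℂ := (n:ℂ) * ζ with hxdef
  set t := ‖ζ‖ with htdef
  have ht0 : 0 ≤ t := norm_nonneg ζ
  have hxabs : ‖x‖ = n * t := by
    rw [hxdef, norm_mul, Complex.norm_natCast]
  set f : ℕ → ℂ := fun j => x ^ j / (Nat.factorial j : ℂ) with hfdef
  have hsum : Summable f := NormedSpace.expSeries_div_summable x
  have hexp : Complex.exp x = ∑' j, f j := by
    rw [Complex.exp_eq_exp_ℂ, NormedSpace.exp_eq_tsum_div]
  have hshift : Summable (fun k => f (k + n)) := (summable_nat_add_iff n).2 hsum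
  set T : ℂ := ∑' k, f (k + n) with hTdef
  have hS : (∑ j ∈ Finset.range n, f j) = Complex.exp x - T := by
    rw [hexp, ← hsum.sum_add_tsum_nat_add n]; ring
  have hxx : Complex.exp x * Complex.exp (-x) = 1 := by
    rw [← Complex.exp_add]; simp
  have hr : (∑ j ∈ Finset.range n, f j) * Complex.exp (-x) - 1 = -(T * Complex.exp (-x)) := by
    rw [hS, sub_mul, hxx]; ring
  rw [hr, norm_neg, norm_mul, Complex.norm_exp]
  have hxre : (-x).re = -(n * ζ.re) := by simp [hxdef]
  rw [hxre]
  -- bound abs T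
  have habsf : ∀ j, ‖(f j)‖ = (n*t)^j / (Nat.factorial j : ℝ) := by
    intro j
    rw [hfdef]
    simp only [norm_div, norm_pow, hxabs, Complex.norm_natCast]
  have hnormsum : Summable (fun j => (n*t)^j / (Nat.factorial j : ℝ)) :=
    NormedSpace.expSeries_div_summable ((n:ℝ)*t)
  have hnormshift : Summable (fun k => (n*t)^(k+n) / (Nat.factorial (k+n) : ℝ)) :=
    (summable_nat_add_iff n).2 hnormsum
  set q : ℝ := n * t / (n + 1) with hqdef
  have hq0 : 0 ≤ q := by positivity
  have hq1 : q < 1 := by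
    rw [hqdef, div_lt_one (by positivity)]
    nlinarith
  have hgeo : Summable (fun k => ((n*t)^n / (Nat.factorial n : ℝ)) * q ^ k) :=
    (summable_geometric_of_lt_one hq0 hq1).mul_left _
  have hterm : ∀ k, (n*t)^(k+n) / (Nat.factorial (k+n) : ℝ)
      ≤ ((n*t)^n / (Nat.factorial n : ℝ)) * q ^ k := by
    intro k
    have hfact : (Nat.factorial n : ℝ) * (n+1)^k ≤ (Nat.factorial (k+n) : ℝ) := by
      have := Nat.factorial_mul_pow_le_factorial (m := n) (n := k)
      rw [Nat.add_comm n k] at this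
      exact_mod_cast this
    have hrhs : ((n*t)^n / (Nat.factorial n : ℝ)) * q ^ k
        = (n*t)^(k+n) / ((Nat.factorial n : ℝ) * (n+1)^k) := by
      rw [hqdef, div_pow, pow_add]
      field_simp
    rw [hrhs]
    apply div_le_div_of_nonneg_left (by positivity) (by positivity) hfact
  have hTbound : ‖T‖ ≤ ((n*t)^n / (Nat.factorial n : ℝ)) * (1 - q)⁻¹ := by
    have h1 : ‖T‖ ≤ ∑' k, (n*t)^(k+n) / (Nat.factorial (k+n) : ℝ) := by
      have := norm_tsum_le_tsum_norm (f := fun k => f (k + n)) (by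
        apply hnormshift.congr
        intro k
        rw [← habsf (k+n)])
      rw [hTdef]
      calc ‖(∑' k, f (k+n))‖ = ‖∑' k, f (k+n)‖ := rfl
        _ ≤ ∑' k, ‖f (k+n)‖ := this
        _ = ∑' k, (n*t)^(k+n) / (Nat.factorial (k+n) : ℝ) := by
            congr 1; funext k; rw [habsf]
    have h2 : ∑' k, (n*t)^(k+n) / (Nat.factorial (k+n) : ℝ)
        ≤ ∑' k, ((n*t)^n / (Nat.factorial n : ℝ)) * q ^ k :=
      Summable.tsum_le_tsum hterm hnormshift hgeo
    have h3 : ∑' k, ((n*t)^n / (Nat.factorial n : ℝ)) * q ^ k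
        = ((n*t)^n / (Nat.factorial n : ℝ)) * (1 - q)⁻¹ := by
      rw [tsum_mul_left, tsum_geometric_of_lt_one hq0 hq1]
    linarith
  -- assemble
  have hfac : (0:ℝ) < (Nat.factorial n : ℝ) := by exact_mod_cast Nat.factorial_pos n
  have hinv : (1 - q)⁻¹ ≤ δ⁻¹ := by
    apply inv_anti₀ hδ0
    have hq : q ≤ 1 - δ := by
      rw [hqdef, div_le_iff₀ (by positivity : (0:ℝ) < (n:ℝ)+1)]
      nlinarith
    linarith
  have hstir : (n*t)^n / (Nat.factorial n : ℝ) ≤ t^n * Real.exp 1 ^ n / Real.sqrt n := by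
    have hlb := factorial_lb hn
    have hd : (0:ℝ) < Real.sqrt n * ((n : ℝ) / Real.exp 1) ^ n := by positivity
    have h1 : (n*t)^n / (Nat.factorial n : ℝ)
        ≤ (n*t)^n / (Real.sqrt n * ((n : ℝ) / Real.exp 1) ^ n) :=
      div_le_div_of_nonneg_left (by positivity) hd hlb
    have h2 : (n*t)^n / (Real.sqrt n * ((n : ℝ) / Real.exp 1) ^ n)
        = t^n * Real.exp 1 ^ n / Real.sqrt n := by
      have he : (0:ℝ) < Real.exp 1 ^ n := by positivity
      have hs : (0:ℝ) < Real.sqrt n := Real.sqrt_pos.2 hnpos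
      have hnn : (0:ℝ) < ((n:ℝ))^n := by positivity
      rw [mul_pow, div_pow, div_eq_div_iff (by positivity) hs.ne']
      field_simp
    rw [h2] at h1
    exact h1
  have hrho : ‖(ζ * Complex.exp (1 - ζ))‖ ^ n
      = t^n * (Real.exp 1 ^ n * Real.exp (-(n * ζ.re))) := by
    rw [abs_formula, ← htdef, mul_pow, ← Real.exp_nat_mul, ← Real.exp_nat_mul, ← Real.exp_add]
    have harg : (n:ℝ) * (1 - ζ.re) = (n:ℝ) * 1 + -((n:ℝ) * ζ.re) := by ring
    rw [harg]
  have h1q : (0:ℝ) < 1 - q := by linarith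
  have hE : (0:ℝ) ≤ Real.exp (-((n:ℝ) * ζ.re)) := (Real.exp_pos _).le
  have hchain : ‖T‖ ≤ δ⁻¹ * (t^n * Real.exp 1 ^ n) / Real.sqrt n := by
    calc ‖T‖ ≤ ((n*t)^n / (Nat.factorial n : ℝ)) * (1 - q)⁻¹ := hTbound
      _ ≤ (t^n * Real.exp 1 ^ n / Real.sqrt n) * δ⁻¹ :=
          mul_le_mul hstir hinv (inv_nonneg.2 h1q.le) (by positivity)
      _ = δ⁻¹ * (t^n * Real.exp 1 ^ n) / Real.sqrt n := by ring
  calc ‖T‖ * Real.exp (-((n:ℝ) * ζ.re))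
      ≤ (δ⁻¹ * (t^n * Real.exp 1 ^ n) / Real.sqrt n) * Real.exp (-((n:ℝ) * ζ.re)) :=
        mul_le_mul_of_nonneg_right hchain hE
    _ = δ⁻¹ * (t^n * (Real.exp 1 ^ n * Real.exp (-((n:ℝ) * ζ.re)))) / Real.sqrt n := by ring
    _ = δ⁻¹ * ‖(ζ * Complex.exp (1 - ζ))‖ ^ n / Real.sqrt n := by rw [hrho]

end BulkAux

/-- Bulk type asymptotics for the Ginibre kernel: if `ζ = z·w̄ ∈ ℂ ∖ (E_sz ∪ {1})` then
`ρ = |ζe^{1−ζ}| ≤ 1`, and away from `ζ = 1` one has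
`K_n(z,w) = n·exp(nζ − n|z|²/2 − n|w|²/2)·(1 + O(ρⁿ/√n))`. -/
theorem bulk_asymptotics_ginibre :
    (∀ ζ : ℂ, ζ ∉ extSzego → ζ ≠ 1 → ‖ζ * Complex.exp (1 - ζ)‖ ≤ 1) ∧
    (∀ η : ℝ, 0 < η → ∃ C : ℝ, ∀ n : ℕ, 1 ≤ n → ∀ z w : ℂ,
      z * (starRingEnd ℂ) w ∉ extSzego →
      η ≤ ‖z * (starRingEnd ℂ) w - 1‖ →
      ∃ r : ℂ,
        ginibreK n z w =
          (n : ℂ) * Complex.exp ((n : ℂ) * (z * (starRingEnd ℂ) w)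
            - (n : ℂ) * ((‖z‖ ^ 2 : ℝ) : ℂ) / 2
            - (n : ℂ) * ((‖w‖ ^ 2 : ℝ) : ℂ) / 2) * (1 + r) ∧
        ‖r‖ ≤
          C * ‖z * (starRingEnd ℂ) w *
            Complex.exp (1 - z * (starRingEnd ℂ) w)‖ ^ n / Real.sqrt n) := by
  constructor
  · intro ζ hζ _
    exact BulkAux.rho_le_one hζ
  · intro η hη
    refine ⟨(min (1/2) (η^2/4))⁻¹, ?_⟩
    intro n hn z w hnot hdist
    set ζ : ℂ := z * (starRingEnd ℂ) w with hζdef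
    set δ : ℝ := min (1/2) (η^2/4) with hδdef
    have hδ0 : 0 < δ := lt_min (by norm_num) (by positivity)
    have hδ1 : δ ≤ 1 := le_trans (min_le_left _ _) (by norm_num)
    obtain ⟨ht1, hg⟩ := BulkAux.not_ext hnot
    set t := ‖ζ‖ with htdef
    have htδ : t ≤ 1 - δ := by
      rcases le_or_gt t (1/2) with h | h
      · have : δ ≤ 1/2 := min_le_left _ _
        linarith
      · have hti : (0:ℝ) < t := by linarith
        have hz0 : ζ ≠ 0 := by
          intro h0
          rw [h0] at htdef
          simp at htdef
          rw [htdef] at h; norm_num at h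
        have hgle : BulkAux.g ζ ≤ 0 := by
          rcases hg with h0 | h0
          · exact absurd h0 hz0
          · exact h0
        have hlog : Real.log t ≤ ζ.re - 1 := by
          unfold BulkAux.g at hgle; rw [← htdef] at hgle; linarith
        have habs2 : ‖(ζ-1)‖^2 = t^2 - 2*ζ.re + 1 := by
          rw [Complex.sq_norm, htdef, Complex.sq_norm, Complex.normSq_apply, Complex.normSq_apply]
          simp only [Complex.sub_re, Complex.sub_im, Complex.one_re, Complex.one_im]
          ring
        have hd2 : η^2 ≤ t^2 - 2*ζ.re + 1 := by
          rw [← habs2]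
          have := norm_nonneg (ζ-1)
          nlinarith [hdist]
        have hinvlog := Real.log_le_sub_one_of_pos (inv_pos.2 hti)
        rw [Real.log_inv] at hinvlog
        have hinv2 : t⁻¹ ≤ 2 := by
          have h' := inv_anti₀ (show (0:ℝ) < 2⁻¹ by norm_num)
            (show (2:ℝ)⁻¹ ≤ t by rw [show (2:ℝ)⁻¹ = 1/2 by norm_num]; linarith)
          simpa using h'
        have h1t : (0:ℝ) ≤ 1 - t := by linarith
        have hid : t⁻¹ - 1 = t⁻¹ * (1 - t) := by field_simp
        have hmul : t⁻¹ * (1-t) ≤ 2 * (1-t) := mul_le_mul_of_nonneg_right hinv2 h1t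
        have hfin : η^2 ≤ 4*(1-t) := by
          nlinarith [mul_nonneg h1t (by linarith : (0:ℝ) ≤ 1 + t)]
        have hδ4 : δ ≤ η^2/4 := min_le_right _ _
        linarith
    refine ⟨(∑ j ∈ Finset.range n, ((n:ℂ)*ζ)^j / (Nat.factorial j : ℂ))
        * Complex.exp (-((n:ℂ)*ζ)) - 1, ?_, ?_⟩
    · rw [ginibreK,
        show (n:ℂ) * z * (starRingEnd ℂ) w = (n:ℂ) * ζ from by rw [hζdef]; ring,
        show Complex.exp (-((n:ℂ) * ((‖z‖ ^ 2 : ℝ):ℂ) / 2)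
              - (n:ℂ) * ((‖w‖ ^ 2 : ℝ):ℂ) / 2)
            = Complex.exp ((n:ℂ) * ζ - (n:ℂ) * ((‖z‖ ^ 2 : ℝ):ℂ) / 2
              - (n:ℂ) * ((‖w‖ ^ 2 : ℝ):ℂ) / 2) * Complex.exp (-((n:ℂ) * ζ)) from by
          rw [← Complex.exp_add]; congr 1; ring]
      ring
    · exact BulkAux.key_bound hn hδ0 hδ1 htδ
end

section
/- There exists a sequence of real numbers b_0, b_1, b_2, … with b_0 = 1 and b_1 = −1/12 such that for every integer k ≥ 0 there is a constant C_k with |n^n·e^{−n}/(n−1)! − √(n/(2π))·(b_0 + b_1/n + … + b_k/n^k)| ≤ C_k·√(n/(2π))·n^{−k−1} for all positive integers n. -/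
open Finset Filter Real Topology

namespace StirlingAux

/-- `F` has asymptotic expansion with coefficients `a` up to order `K`. -/
def ExpU (F : ℕ → ℝ) (a : ℕ → ℝ) (K : ℕ) : Prop :=
  ∃ C : ℝ, ∀ n : ℕ, 1 ≤ n →
    |F n - ∑ j ∈ Finset.range (K+1), a j / (n:ℝ)^j| ≤ C / (n:ℝ)^(K+1)

lemma expU_congr {F : ℕ → ℝ} {a b : ℕ → ℝ} {K : ℕ}
    (hab : ∀ j ≤ K, a j = b j) (h : ExpU F a K) : ExpU F b K := by
  obtain ⟨C, hC⟩ := h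
  refine ⟨C, fun n hn => ?_⟩
  have : ∑ j ∈ Finset.range (K+1), a j / (n:ℝ)^j
      = ∑ j ∈ Finset.range (K+1), b j / (n:ℝ)^j := by
    refine Finset.sum_congr rfl fun j hj => ?_
    rw [hab j (by simpa [Nat.lt_succ_iff] using hj)]
  rw [← this]; exact hC n hn

lemma expU_funext {F G : ℕ → ℝ} {a : ℕ → ℝ} {K : ℕ}
    (hFG : ∀ n, 1 ≤ n → F n = G n) (h : ExpU F a K) : ExpU G a K := by
  obtain ⟨C, hC⟩ := h
  exact ⟨C, fun n hn => by rw [← hFG n hn]; exact hC n hn⟩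

lemma expU_add {F G : ℕ → ℝ} {a b : ℕ → ℝ} {K : ℕ}
    (hF : ExpU F a K) (hG : ExpU G b K) :
    ExpU (fun n => F n + G n) (fun j => a j + b j) K := by
  obtain ⟨C, hC⟩ := hF; obtain ⟨D, hD⟩ := hG
  refine ⟨C + D, fun n hn => ?_⟩
  have hn0 : (0:ℝ) < (n:ℝ)^(K+1) := by positivity
  have hsum : ∑ j ∈ Finset.range (K+1), (a j + b j) / (n:ℝ)^j
      = (∑ j ∈ Finset.range (K+1), a j / (n:ℝ)^j)
        + ∑ j ∈ Finset.range (K+1), b j / (n:ℝ)^j := by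
    rw [← Finset.sum_add_distrib]
    exact Finset.sum_congr rfl fun j _ => add_div _ _ _
  calc |F n + G n - ∑ j ∈ Finset.range (K+1), (a j + b j) / (n:ℝ)^j|
      = |(F n - ∑ j ∈ Finset.range (K+1), a j / (n:ℝ)^j)
          + (G n - ∑ j ∈ Finset.range (K+1), b j / (n:ℝ)^j)| := by
        rw [hsum]; congr 1; ring
    _ ≤ _ := abs_add_le _ _
    _ ≤ C / (n:ℝ)^(K+1) + D / (n:ℝ)^(K+1) := add_le_add (hC n hn) (hD n hn)
    _ = (C + D) / (n:ℝ)^(K+1) := by ring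

lemma expU_smul {F : ℕ → ℝ} {a : ℕ → ℝ} {K : ℕ} (c : ℝ) (hF : ExpU F a K) :
    ExpU (fun n => c * F n) (fun j => c * a j) K := by
  obtain ⟨C, hC⟩ := hF
  refine ⟨|c| * C, fun n hn => ?_⟩
  have : c * F n - ∑ j ∈ Finset.range (K+1), c * a j / (n:ℝ)^j
      = c * (F n - ∑ j ∈ Finset.range (K+1), a j / (n:ℝ)^j) := by
    rw [mul_sub, Finset.mul_sum]
    congr 1
    exact Finset.sum_congr rfl fun j _ => mul_div_assoc _ _ _
  rw [this, abs_mul, mul_div_assoc]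
  exact mul_le_mul_of_nonneg_left (hC n hn) (abs_nonneg c)

lemma expU_sub {F G : ℕ → ℝ} {a b : ℕ → ℝ} {K : ℕ}
    (hF : ExpU F a K) (hG : ExpU G b K) :
    ExpU (fun n => F n - G n) (fun j => a j - b j) K := by
  have := expU_add hF (expU_smul (-1) hG)
  simpa [sub_eq_add_neg] using this

lemma expU_const (c : ℝ) (K : ℕ) :
    ExpU (fun _ => c) (fun j => if j = 0 then c else 0) K := by
  refine ⟨0, fun n hn => ?_⟩
  have h1 : ((n:ℝ))^(0:ℕ) = 1 := pow_zero _
  have : ∑ j ∈ Finset.range (K+1), (if j = 0 then c else 0) / (n:ℝ)^j = c := by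
    rw [Finset.sum_eq_single 0]
    · simp
    · intro j hj hj0; simp [hj0]
    · intro h; simp at h
  rw [this]; simp

/-- error-transfer: if `F` expands and `G` is close to `F`, `G` expands. -/
lemma expU_of_close {F G : ℕ → ℝ} {a : ℕ → ℝ} {K : ℕ}
    (hF : ExpU F a K) (h : ∃ C : ℝ, ∀ n : ℕ, 1 ≤ n → |G n - F n| ≤ C / (n:ℝ)^(K+1)) :
    ExpU G a K := by
  obtain ⟨C, hC⟩ := hF; obtain ⟨D, hD⟩ := h
  refine ⟨D + C, fun n hn => ?_⟩
  calc |G n - ∑ j ∈ Finset.range (K+1), a j / (n:ℝ)^j|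
      = |(G n - F n) + (F n - ∑ j ∈ Finset.range (K+1), a j / (n:ℝ)^j)| := by congr 1; ring
    _ ≤ |G n - F n| + |F n - ∑ j ∈ Finset.range (K+1), a j / (n:ℝ)^j| := abs_add_le _ _
    _ ≤ D / (n:ℝ)^(K+1) + C / (n:ℝ)^(K+1) := add_le_add (hD n hn) (hC n hn)
    _ = (D + C) / (n:ℝ)^(K+1) := by ring


/-- restriction to a lower order -/
lemma expU_of_le {F : ℕ → ℝ} {a : ℕ → ℝ} {K L : ℕ} (h : ExpU F a L) (hKL : K ≤ L) :
    ExpU F a K := by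
  obtain ⟨C, hC⟩ := h
  refine ⟨C + ∑ j ∈ Finset.Ico (K+1) (L+1), |a j|, fun n hn => ?_⟩
  have hn1 : (1:ℝ) ≤ (n:ℝ) := by exact_mod_cast hn
  have hnp : (0:ℝ) < n := lt_of_lt_of_le one_pos hn1
  have hsplit : ∑ j ∈ Finset.range (L+1), a j / (n:ℝ)^j
      = (∑ j ∈ Finset.range (K+1), a j / (n:ℝ)^j)
        + ∑ j ∈ Finset.Ico (K+1) (L+1), a j / (n:ℝ)^j := by
    rw [Finset.range_eq_Ico, Finset.range_eq_Ico]
    exact (Finset.sum_Ico_consecutive (fun j => a j / (n:ℝ)^j) (Nat.zero_le _) (Nat.succ_le_succ hKL)).symm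
  have key : |F n - ∑ j ∈ Finset.range (K+1), a j / (n:ℝ)^j|
      ≤ |F n - ∑ j ∈ Finset.range (L+1), a j / (n:ℝ)^j|
        + ∑ j ∈ Finset.Ico (K+1) (L+1), |a j| / (n:ℝ)^j := by
    have : F n - ∑ j ∈ Finset.range (K+1), a j / (n:ℝ)^j
        = (F n - ∑ j ∈ Finset.range (L+1), a j / (n:ℝ)^j)
          + ∑ j ∈ Finset.Ico (K+1) (L+1), a j / (n:ℝ)^j := by
      rw [hsplit]; ring
    rw [this]
    refine (abs_add_le _ _).trans (add_le_add le_rfl ?_)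
    refine (Finset.abs_sum_le_sum_abs _ _).trans ?_
    refine le_of_eq (Finset.sum_congr rfl fun j _ => ?_)
    rw [abs_div, abs_of_nonneg (by positivity : (0:ℝ) ≤ (n:ℝ)^j)]
  refine key.trans ?_
  have h2 : ∑ j ∈ Finset.Ico (K+1) (L+1), |a j| / (n:ℝ)^j
      ≤ (∑ j ∈ Finset.Ico (K+1) (L+1), |a j|) / (n:ℝ)^(K+1) := by
    rw [Finset.sum_div]
    refine Finset.sum_le_sum fun j hj => ?_
    have hj1 : K+1 ≤ j := (Finset.mem_Ico.mp hj).1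
    exact div_le_div_of_nonneg_left (abs_nonneg _) (by positivity)
      (pow_le_pow_right₀ hn1 hj1)
  have h1 : |F n - ∑ j ∈ Finset.range (L+1), a j / (n:ℝ)^j| ≤ C / (n:ℝ)^(K+1) := by
    refine (hC n hn).trans ?_
    have hCnonneg : 0 ≤ C := by
      have := hC 1 le_rfl
      have h0 : (0:ℝ) ≤ C / (1:ℝ)^(L+1) := le_trans (abs_nonneg _) (by simpa using this)
      simpa using h0
    exact div_le_div_of_nonneg_left hCnonneg (by positivity)
      (pow_le_pow_right₀ hn1 (Nat.succ_le_succ hKL))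
  calc _ ≤ C / (n:ℝ)^(K+1) + (∑ j ∈ Finset.Ico (K+1) (L+1), |a j|) / (n:ℝ)^(K+1) :=
        add_le_add h1 h2
    _ = _ := by ring

/-- uniqueness of expansion coefficients -/
lemma expU_unique {F : ℕ → ℝ} {a b : ℕ → ℝ} {K L : ℕ}
    (ha : ExpU F a K) (hb : ExpU F b L) : ∀ j, j ≤ K → j ≤ L → a j = b j := by
  intro j hjK hjL
  induction j using Nat.strong_induction_on with
  | _ j ih =>
  -- both restrict to order j
  have ha' : ExpU F a j := expU_of_le ha hjK
  have hb' : ExpU F b j := expU_of_le hb hjL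
  obtain ⟨C, hC⟩ := ha'; obtain ⟨D, hD⟩ := hb'
  -- a i = b i for i < j
  have hib : ∀ i, i < j → a i = b i := fun i hi =>
    ih i hi (le_trans (Nat.le_of_lt hi) hjK) (le_trans (Nat.le_of_lt hi) hjL)
  have key : ∀ n : ℕ, 1 ≤ n → |a j - b j| ≤ (C + D) / (n:ℝ) := by
    intro n hn
    have hn1 : (1:ℝ) ≤ (n:ℝ) := by exact_mod_cast hn
    have hnp : (0:ℝ) < (n:ℝ)^j := by positivity
    have hsum : ∑ i ∈ Finset.range (j+1), a i / (n:ℝ)^i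
        - ∑ i ∈ Finset.range (j+1), b i / (n:ℝ)^i = (a j - b j) / (n:ℝ)^j := by
      rw [Finset.sum_range_succ, Finset.sum_range_succ]
      have : ∑ i ∈ Finset.range j, a i / (n:ℝ)^i = ∑ i ∈ Finset.range j, b i / (n:ℝ)^i :=
        Finset.sum_congr rfl fun i hi => by rw [hib i (Finset.mem_range.mp hi)]
      rw [this]; ring
    have habs : |(a j - b j) / (n:ℝ)^j| ≤ (C + D) / (n:ℝ)^(j+1) := by
      rw [← hsum]
      have : ∑ i ∈ Finset.range (j+1), a i / (n:ℝ)^i - ∑ i ∈ Finset.range (j+1), b i / (n:ℝ)^i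
          = (F n - ∑ i ∈ Finset.range (j+1), b i / (n:ℝ)^i)
            - (F n - ∑ i ∈ Finset.range (j+1), a i / (n:ℝ)^i) := by ring
      rw [this]
      refine (abs_sub _ _).trans ?_
      calc |F n - ∑ i ∈ Finset.range (j+1), b i / (n:ℝ)^i|
            + |F n - ∑ i ∈ Finset.range (j+1), a i / (n:ℝ)^i|
          ≤ D / (n:ℝ)^(j+1) + C / (n:ℝ)^(j+1) := add_le_add (hD n hn) (hC n hn)
        _ = (C + D) / (n:ℝ)^(j+1) := by ring
    have : |a j - b j| / (n:ℝ)^j ≤ (C + D) / (n:ℝ)^(j+1) := by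
      rwa [abs_div, abs_of_nonneg hnp.le] at habs
    have := mul_le_mul_of_nonneg_right this hnp.le
    rw [div_mul_cancel₀ _ (ne_of_gt hnp)] at this
    calc |a j - b j| ≤ (C + D) / (n:ℝ)^(j+1) * (n:ℝ)^j := this
      _ = (C + D) / (n:ℝ) := by
          rw [pow_succ]
          field_simp
  -- conclude a j = b j
  by_contra hne
  have hpos : 0 < |a j - b j| := abs_pos.mpr (sub_ne_zero.mpr hne)
  obtain ⟨n, hn⟩ := exists_nat_gt ((C + D) / |a j - b j|)
  have hn1 : 1 ≤ n := by
    rcases Nat.eq_zero_or_pos n with h0 | h1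
    · exfalso
      subst h0
      have hkey := key 1 le_rfl
      simp only [Nat.cast_one, div_one] at hkey
      have hCD : 0 ≤ C + D := le_trans hpos.le hkey
      have h2 : 0 ≤ (C + D) / |a j - b j| := div_nonneg hCD hpos.le
      simp only [Nat.cast_zero] at hn
      linarith
    · exact h1
  have h2 := key n hn1
  have hnp : (0:ℝ) < (n:ℝ) := by exact_mod_cast Nat.lt_of_lt_of_le Nat.zero_lt_one hn1
  rw [div_lt_iff₀ hpos] at hn
  have : (C + D) / (n:ℝ) < |a j - b j| := by
    rw [div_lt_iff₀ hnp]
    nlinarith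
  linarith


/-- Cauchy convolution of coefficient sequences -/
def conv (a b : ℕ → ℝ) (i : ℕ) : ℝ := ∑ p ∈ Finset.range (i+1), a p * b (i-p)

lemma expU_bounded {F : ℕ → ℝ} {a : ℕ → ℝ} {K : ℕ} (h : ExpU F a K) :
    ∃ M : ℝ, 0 ≤ M ∧ ∀ n : ℕ, 1 ≤ n → |F n| ≤ M := by
  obtain ⟨C, hC⟩ := h
  refine ⟨|C| + ∑ j ∈ Finset.range (K+1), |a j|, by positivity, fun n hn => ?_⟩
  have hn1 : (1:ℝ) ≤ (n:ℝ) := by exact_mod_cast hn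
  calc |F n| = |(F n - ∑ j ∈ Finset.range (K+1), a j / (n:ℝ)^j)
        + ∑ j ∈ Finset.range (K+1), a j / (n:ℝ)^j| := by congr 1; ring
    _ ≤ |F n - ∑ j ∈ Finset.range (K+1), a j / (n:ℝ)^j|
        + |∑ j ∈ Finset.range (K+1), a j / (n:ℝ)^j| := abs_add_le _ _
    _ ≤ |C| + ∑ j ∈ Finset.range (K+1), |a j| := by
        refine add_le_add ?_ ?_
        · refine (hC n hn).trans ?_
          calc C / (n:ℝ)^(K+1) ≤ |C| / 1 := by
                gcongr
                · exact le_abs_self C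
                · exact one_le_pow₀ hn1
            _ = |C| := div_one _
        · refine (Finset.abs_sum_le_sum_abs _ _).trans ?_
          refine Finset.sum_le_sum fun j _ => ?_
          rw [abs_div, abs_of_nonneg (by positivity : (0:ℝ) ≤ (n:ℝ)^j)]
          calc |a j| / (n:ℝ)^j ≤ |a j| / 1 := by
                refine div_le_div_of_nonneg_left (abs_nonneg _) one_pos ?_
                exact one_le_pow₀ hn1
            _ = |a j| := div_one _





lemma conv_sum_eq (a b : ℕ → ℝ) (K : ℕ) (x : ℝ) :
    ∑ i ∈ Finset.range (K+1), (conv a b i) * x^i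
      = ∑ pq ∈ (Finset.range (K+1) ×ˢ Finset.range (K+1)).filter
          (fun pq => pq.1 + pq.2 ≤ K), a pq.1 * b pq.2 * x^(pq.1+pq.2) := by
  unfold conv
  simp only [Finset.sum_mul]
  rw [Finset.sum_sigma']
  refine Finset.sum_bij' (fun ip _ => (ip.2, ip.1 - ip.2))
    (fun pq _ => ⟨pq.1 + pq.2, pq.1⟩) ?_ ?_ ?_ ?_ ?_
  · rintro ⟨i, p⟩ h
    simp only [Finset.mem_sigma, Finset.mem_range] at h
    simp only [Finset.mem_filter, Finset.mem_product, Finset.mem_range]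
    obtain ⟨hi, hp⟩ := h
    have hpi : p ≤ i := Nat.lt_succ_iff.mp hp
    refine ⟨⟨Nat.lt_succ_iff.mpr (le_trans hpi (Nat.lt_succ_iff.mp hi)), ?_⟩, ?_⟩
    · exact Nat.lt_succ_iff.mpr (le_trans (Nat.sub_le _ _) (Nat.lt_succ_iff.mp hi))
    · rw [Nat.add_sub_cancel' hpi]; exact Nat.lt_succ_iff.mp hi
  · rintro ⟨p, q⟩ h
    simp only [Finset.mem_filter, Finset.mem_product, Finset.mem_range] at h
    simp only [Finset.mem_sigma, Finset.mem_range]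
    exact ⟨Nat.lt_succ_iff.mpr h.2, Nat.lt_succ_iff.mpr (Nat.le_add_right _ _)⟩
  · rintro ⟨i, p⟩ h
    simp only [Finset.mem_sigma, Finset.mem_range] at h
    have hpi : p ≤ i := Nat.lt_succ_iff.mp h.2
    simp [Nat.add_sub_cancel' hpi]
  · rintro ⟨p, q⟩ h
    simp
  · rintro ⟨i, p⟩ h
    simp only [Finset.mem_sigma, Finset.mem_range] at h
    have hpi : p ≤ i := Nat.lt_succ_iff.mp h.2
    simp [Nat.add_sub_cancel' hpi]

lemma expU_mul {F G : ℕ → ℝ} {a b : ℕ → ℝ} {K : ℕ}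
    (hF : ExpU F a K) (hG : ExpU G b K) :
    ExpU (fun n => F n * G n) (conv a b) K := by
  obtain ⟨MF, hMF0, hMF⟩ := expU_bounded hF
  obtain ⟨C, hC⟩ := hF
  obtain ⟨D, hD⟩ := hG
  set MB : ℝ := ∑ j ∈ Finset.range (K+1), |b j| with hMB
  have hMB0 : 0 ≤ MB := Finset.sum_nonneg fun j _ => abs_nonneg _
  set E : ℝ := ∑ p ∈ Finset.range (K+1), ∑ q ∈ Finset.range (K+1), |a p| * |b q| with hE
  have hE0 : 0 ≤ E := Finset.sum_nonneg fun p _ =>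
    Finset.sum_nonneg fun q _ => mul_nonneg (abs_nonneg _) (abs_nonneg _)
  refine ⟨MF * D + MB * C + E, fun n hn => ?_⟩
  have hn1 : (1:ℝ) ≤ (n:ℝ) := by exact_mod_cast hn
  have hnp : (0:ℝ) < (n:ℝ) := lt_of_lt_of_le one_pos hn1
  set SA := ∑ j ∈ Finset.range (K+1), a j / (n:ℝ)^j with hSA
  set SB := ∑ j ∈ Finset.range (K+1), b j / (n:ℝ)^j with hSB
  have hSBabs : |SB| ≤ MB := by
    refine (Finset.abs_sum_le_sum_abs _ _).trans (Finset.sum_le_sum fun j _ => ?_)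
    rw [abs_div, abs_of_nonneg (by positivity : (0:ℝ) ≤ (n:ℝ)^j)]
    calc |b j| / (n:ℝ)^j ≤ |b j| / 1 := by
          gcongr
          exact one_le_pow₀ hn1
      _ = |b j| := div_one _
  -- step 1 : |F n * G n - SA * SB|
  have step1 : |F n * G n - SA * SB| ≤ (MF * D + MB * C) / (n:ℝ)^(K+1) := by
    have : F n * G n - SA * SB = F n * (G n - SB) + SB * (F n - SA) := by ring
    rw [this]
    calc |F n * (G n - SB) + SB * (F n - SA)|
        ≤ |F n * (G n - SB)| + |SB * (F n - SA)| := abs_add_le _ _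
      _ = |F n| * |G n - SB| + |SB| * |F n - SA| := by rw [abs_mul, abs_mul]
      _ ≤ MF * (D / (n:ℝ)^(K+1)) + MB * (C / (n:ℝ)^(K+1)) := by
          refine add_le_add (mul_le_mul (hMF n hn) (hD n hn) (abs_nonneg _) hMF0) ?_
          exact mul_le_mul hSBabs (hC n hn) (abs_nonneg _) hMB0
      _ = (MF * D + MB * C) / (n:ℝ)^(K+1) := by ring
  -- step 2 : |SA * SB - SC| where SC is the truncated Cauchy product
  set SC := ∑ i ∈ Finset.range (K+1), conv a b i / (n:ℝ)^i with hSC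
  set x : ℝ := ((n:ℝ))⁻¹ with hx
  have hx0 : 0 < x := inv_pos.mpr hnp
  have hx1 : x ≤ 1 := inv_le_one_of_one_le₀ hn1
  have hpow : ∀ j : ℕ, (1:ℝ) / (n:ℝ)^j = x^j := fun j => by
    rw [hx, inv_pow, one_div]
  have hSA' : SA = ∑ j ∈ Finset.range (K+1), a j * x^j :=
    Finset.sum_congr rfl fun j _ => by rw [← hpow j]; ring
  have hSB' : SB = ∑ j ∈ Finset.range (K+1), b j * x^j :=
    Finset.sum_congr rfl fun j _ => by rw [← hpow j]; ring
  have hSC' : SC = ∑ i ∈ Finset.range (K+1), conv a b i * x^i :=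
    Finset.sum_congr rfl fun j _ => by rw [← hpow j]; ring
  have hprod : SA * SB = ∑ pq ∈ Finset.range (K+1) ×ˢ Finset.range (K+1),
      a pq.1 * b pq.2 * x^(pq.1+pq.2) := by
    rw [hSA', hSB', Finset.sum_mul_sum, Finset.sum_product]
    exact Finset.sum_congr rfl fun p _ => Finset.sum_congr rfl fun q _ => by
      rw [pow_add]; ring
  have hsplit := Finset.sum_filter_add_sum_filter_not
    (Finset.range (K+1) ×ˢ Finset.range (K+1)) (fun pq => pq.1 + pq.2 ≤ K)
    (fun pq => a pq.1 * b pq.2 * x^(pq.1+pq.2))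
  have hdiff : SA * SB - SC = ∑ pq ∈ (Finset.range (K+1) ×ˢ Finset.range (K+1)).filter
      (fun pq => ¬ pq.1 + pq.2 ≤ K), a pq.1 * b pq.2 * x^(pq.1+pq.2) := by
    rw [hprod, hSC', conv_sum_eq a b K x, ← hsplit]; ring
  have step2 : |SA * SB - SC| ≤ E / (n:ℝ)^(K+1) := by
    rw [hdiff]
    have hEx : E / (n:ℝ)^(K+1) = E * x^(K+1) := by
      rw [← hpow (K+1)]; ring
    rw [hEx]
    refine (Finset.abs_sum_le_sum_abs _ _).trans ?_
    have hterm : ∀ pq ∈ (Finset.range (K+1) ×ˢ Finset.range (K+1)).filter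
        (fun pq => ¬ pq.1 + pq.2 ≤ K),
        |a pq.1 * b pq.2 * x^(pq.1+pq.2)| ≤ |a pq.1| * |b pq.2| * x^(K+1) := by
      rintro ⟨p, q⟩ h
      simp only [Finset.mem_filter, Finset.mem_product, Finset.mem_range, not_le] at h
      rw [abs_mul, abs_mul, abs_of_nonneg (le_of_lt (pow_pos hx0 _))]
      refine mul_le_mul_of_nonneg_left ?_ (mul_nonneg (abs_nonneg _) (abs_nonneg _))
      exact pow_le_pow_of_le_one hx0.le hx1 h.2
    refine (Finset.sum_le_sum hterm).trans ?_
    rw [hE, ← Finset.sum_product']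
    have : ∑ pq ∈ Finset.range (K+1) ×ˢ Finset.range (K+1),
        |a pq.1| * |b pq.2| * x^(K+1)
        = (∑ pq ∈ Finset.range (K+1) ×ˢ Finset.range (K+1), |a pq.1| * |b pq.2|) * x^(K+1) := by
      rw [Finset.sum_mul]
    refine le_trans (Finset.sum_le_sum_of_subset_of_nonneg (Finset.filter_subset _ _)
      fun pq _ _ => by positivity) ?_
    rw [this]
  -- combine
  calc |F n * G n - SC| = |(F n * G n - SA * SB) + (SA * SB - SC)| := by congr 1; ring
    _ ≤ |F n * G n - SA * SB| + |SA * SB - SC| := abs_add_le _ _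
    _ ≤ (MF * D + MB * C) / (n:ℝ)^(K+1) + E / (n:ℝ)^(K+1) := add_le_add step1 step2
    _ = (MF * D + MB * C + E) / (n:ℝ)^(K+1) := by ring


lemma pow_comparison (t : ℕ) {a : ℝ} (ha : 1 ≤ a) :
    1/(a+1)^(t+2) ≤ 1/a^(t+1) - 1/(a+1)^(t+1) := by
  have ha0 : 0 < a := lt_of_lt_of_le one_pos ha
  have hb0 : 0 < a + 1 := by linarith
  have hP : 0 < a^t := pow_pos ha0 t
  have hQ : 0 < (a+1)^(t+1) := pow_pos hb0 (t+1)
  have haP : 0 < a^(t+1) := pow_pos ha0 (t+1)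
  have key : a^(t+1) + (t+1) * a^t ≤ (a+1)^(t+1) := by
    have hinv : 0 < 1/a := by positivity
    have h1 : 1 + ((t+1):ℕ) * (1/a) ≤ (1 + 1/a)^(t+1) :=
      one_add_mul_le_pow (by linarith : (-2:ℝ) ≤ 1/a) (t+1)
    have h2 := mul_le_mul_of_nonneg_right h1 (le_of_lt (pow_pos ha0 (t+1)))
    calc a^(t+1) + (t+1) * a^t = (1 + ((t+1):ℕ) * (1/a)) * a^(t+1) := by
          push_cast
          field_simp
          ring
      _ ≤ (1 + 1/a)^(t+1) * a^(t+1) := h2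
      _ = (a+1)^(t+1) := by
          rw [← mul_pow]
          congr 1
          field_simp
  have h3 : a ≤ ((t:ℝ)+1) * (a+1) := by nlinarith [Nat.cast_nonneg (α := ℝ) t]
  have e2 : a^(t+1) = a^t * a := pow_succ _ _
  have key' : ((t:ℝ)+1) * a^t ≤ (a+1)^(t+1) - a^(t+1) := by push_cast at key; linarith
  calc 1/(a+1)^(t+2) = 1/((a+1)^(t+1) * (a+1)) := by rw [pow_succ]
    _ ≤ ((t:ℝ)+1)/(a * (a+1)^(t+1)) := by
        rw [div_le_div_iff₀ (by positivity) (by positivity)]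
        have h4 := mul_le_mul_of_nonneg_right h3 hQ.le
        nlinarith [h4]
    _ ≤ ((a+1)^(t+1) - a^(t+1))/(a^(t+1) * (a+1)^(t+1)) := by
        rw [div_le_div_iff₀ (by positivity) (by positivity)]
        have h5 := mul_le_mul_of_nonneg_right key' (mul_pos ha0 hQ).le
        calc ((t:ℝ)+1) * (a^(t+1) * (a+1)^(t+1))
            = ((t:ℝ)+1) * a^t * (a * (a+1)^(t+1)) := by rw [e2]; ring
          _ ≤ ((a+1)^(t+1) - a^(t+1)) * (a * (a+1)^(t+1)) := h5
    _ = 1/a^(t+1) - 1/(a+1)^(t+1) := by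
        rw [div_sub_div _ _ (ne_of_gt haP) (ne_of_gt hQ), one_mul, mul_one]

/-- partial tail sum bound : `∑_{m ∈ [n, N)} 1/m^(t+2) ≤ 2/n^(t+1)` -/
lemma tail_sum_bound (t : ℕ) {n : ℕ} (hn : 1 ≤ n) (N : ℕ) :
    ∑ m ∈ Finset.Ico n N, (1:ℝ)/(m:ℝ)^(t+2) ≤ 2/(n:ℝ)^(t+1) := by
  have hn1 : (1:ℝ) ≤ (n:ℝ) := by exact_mod_cast hn
  have hnp : (0:ℝ) < (n:ℝ) := by linarith
  have main : ∀ N : ℕ, n+1 ≤ N → ∑ m ∈ Finset.Ico (n+1) N, (1:ℝ)/(m:ℝ)^(t+2)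
      ≤ 1/(n:ℝ)^(t+1) - 1/((N:ℝ)-1)^(t+1) := by
    intro N hN
    induction N, hN using Nat.le_induction with
    | base => simp
    | succ N hN ih =>
      rw [Finset.sum_Ico_succ_top hN]
      have hN2 : 2 ≤ N := by omega
      have hNr : (1:ℝ) ≤ (N:ℝ) - 1 := by
        have : (2:ℝ) ≤ (N:ℝ) := by exact_mod_cast hN2
        linarith
      have hcmp := pow_comparison t hNr
      rw [sub_add_cancel] at hcmp
      have : ((N:ℝ)+1) - 1 = (N:ℝ) := by ring
      push_cast
      rw [this]
      linarith
  rcases le_or_gt N n with h | h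
  · rw [Finset.Ico_eq_empty (by omega)]
    simp
    positivity
  · have hsplit : Finset.Ico n N = insert n (Finset.Ico (n+1) N) :=
      (Finset.insert_Ico_add_one_left_eq_Ico h).symm
    rw [hsplit, Finset.sum_insert (by simp)]
    have h1 : (1:ℝ)/(n:ℝ)^(t+2) ≤ 1/(n:ℝ)^(t+1) := by
      gcongr
      · omega
    rcases le_or_gt (n+1) N with h2 | h2
    · have hN2 : (2:ℝ) ≤ (N:ℝ) := by exact_mod_cast (by omega : 2 ≤ N)
      have hpos : (0:ℝ) ≤ 1/((N:ℝ)-1)^(t+1) := by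
        have h9 : (0:ℝ) < (N:ℝ)-1 := by linarith
        positivity
      have : ∑ m ∈ Finset.Ico (n+1) N, (1:ℝ)/(m:ℝ)^(t+2) ≤ 1/(n:ℝ)^(t+1) := by
        have h8 := main N h2
        linarith
      calc (1:ℝ)/(n:ℝ)^(t+2) + ∑ m ∈ Finset.Ico (n+1) N, (1:ℝ)/(m:ℝ)^(t+2)
          ≤ 1/(n:ℝ)^(t+1) + 1/(n:ℝ)^(t+1) := add_le_add h1 this
        _ = 2/(n:ℝ)^(t+1) := by ring
    · rw [Finset.Ico_eq_empty (by omega), Finset.sum_empty, add_zero]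
      calc (1:ℝ)/(n:ℝ)^(t+2) ≤ 1/(n:ℝ)^(t+1) := h1
        _ ≤ 2/(n:ℝ)^(t+1) := by
            rw [div_le_div_iff₀ (by positivity) (by positivity)]
            nlinarith [pow_pos hnp (t+1)]




lemma telescope {h : ℕ → ℝ} {B : ℝ} {t : ℕ}
    (h0 : Filter.Tendsto h atTop (𝓝 0))
    (hd : ∀ n : ℕ, 1 ≤ n → |h n - h (n+1)| ≤ B / (n:ℝ)^(t+2)) :
    ∀ n : ℕ, 1 ≤ n → |h n| ≤ 2*B / (n:ℝ)^(t+1) := by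
  have hB : 0 ≤ B := by
    have := hd 1 le_rfl
    have h2 := le_trans (abs_nonneg _) this
    simpa using h2
  intro n hn
  have key : ∀ N : ℕ, n ≤ N → |h n - h N| ≤ ∑ m ∈ Finset.Ico n N, B / (m:ℝ)^(t+2) := by
    intro N hN
    induction N, hN using Nat.le_induction with
    | base => simp
    | succ N hN ih =>
      have hN1 : 1 ≤ N := le_trans hn hN
      calc |h n - h (N+1)| = |(h n - h N) + (h N - h (N+1))| := by congr 1; ring
        _ ≤ |h n - h N| + |h N - h (N+1)| := abs_add_le _ _
        _ ≤ (∑ m ∈ Finset.Ico n N, B / (m:ℝ)^(t+2)) + B / (N:ℝ)^(t+2) :=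
            add_le_add ih (hd N hN1)
        _ = ∑ m ∈ Finset.Ico n (N+1), B / (m:ℝ)^(t+2) := by
            rw [Finset.sum_Ico_succ_top hN]
  have bound : ∀ N : ℕ, n ≤ N → |h n - h N| ≤ 2*B / (n:ℝ)^(t+1) := by
    intro N hN
    refine (key N hN).trans ?_
    have : ∑ m ∈ Finset.Ico n N, B / (m:ℝ)^(t+2)
        = B * ∑ m ∈ Finset.Ico n N, (1:ℝ) / (m:ℝ)^(t+2) := by
      rw [Finset.mul_sum]
      exact Finset.sum_congr rfl fun m _ => by ring
    rw [this]
    calc B * ∑ m ∈ Finset.Ico n N, (1:ℝ) / (m:ℝ)^(t+2)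
        ≤ B * (2/(n:ℝ)^(t+1)) := mul_le_mul_of_nonneg_left (tail_sum_bound t hn N) hB
      _ = 2*B / (n:ℝ)^(t+1) := by ring
  have hlim : Filter.Tendsto (fun N => |h n - h N|) atTop (𝓝 |h n - 0|) :=
    ((tendsto_const_nhds.sub h0).abs)
  rw [sub_zero] at hlim
  exact le_of_tendsto hlim (Filter.eventually_atTop.mpr ⟨n, bound⟩)

/-- patching finitely many small `n` -/
lemma patch {G : ℕ → ℝ} {K N₀ : ℕ}
    (h : ∃ C : ℝ, ∀ n : ℕ, N₀ ≤ n → |G n| ≤ C / (n:ℝ)^(K+1)) :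
    ∃ C : ℝ, ∀ n : ℕ, 1 ≤ n → |G n| ≤ C / (n:ℝ)^(K+1) := by
  obtain ⟨C, hC⟩ := h
  refine ⟨|C| + ∑ m ∈ Finset.range N₀, |G m| * (m:ℝ)^(K+1), fun n hn => ?_⟩
  have hn1 : (1:ℝ) ≤ (n:ℝ) := by exact_mod_cast hn
  have hnp : (0:ℝ) < (n:ℝ)^(K+1) := by positivity
  have hsum0 : 0 ≤ ∑ m ∈ Finset.range N₀, |G m| * (m:ℝ)^(K+1) :=
    Finset.sum_nonneg fun m _ => mul_nonneg (abs_nonneg _) (by positivity)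
  rcases le_or_gt N₀ n with hge | hlt
  · refine (hC n hge).trans ?_
    gcongr
    exact (le_abs_self C).trans (by linarith)
  · have hmem : n ∈ Finset.range N₀ := Finset.mem_range.mpr hlt
    have hterm : |G n| * (n:ℝ)^(K+1) ≤ ∑ m ∈ Finset.range N₀, |G m| * (m:ℝ)^(K+1) :=
      Finset.single_le_sum (f := fun m => |G m| * (m:ℝ)^(K+1))
        (fun m _ => mul_nonneg (abs_nonneg _) (by positivity)) hmem
    rw [le_div_iff₀ hnp]
    calc |G n| * (n:ℝ)^(K+1) ≤ ∑ m ∈ Finset.range N₀, |G m| * (m:ℝ)^(K+1) := hterm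
      _ ≤ |C| + ∑ m ∈ Finset.range N₀, |G m| * (m:ℝ)^(K+1) := by
          have : (0:ℝ) ≤ |C| := abs_nonneg _
          linarith



/-- geometric coefficients of `1/(n+1)` as a series in `1/n` -/
def g : ℕ → ℝ := fun i => if i = 0 then 0 else (-1)^(i+1)

/-- convolution powers -/
def cpow (a : ℕ → ℝ) : ℕ → ℕ → ℝ
  | 0 => fun i => if i = 0 then 1 else 0
  | (m+1) => conv a (cpow a m)

lemma cpow_vanish {a : ℕ → ℝ} (ha : a 0 = 0) : ∀ m i, i < m → cpow a m i = 0 := by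
  intro m
  induction m with
  | zero => intro i hi; omega
  | succ m ih =>
    intro i hi
    show conv a (cpow a m) i = 0
    unfold conv
    refine Finset.sum_eq_zero fun p hp => ?_
    simp only [Finset.mem_range] at hp
    rcases Nat.eq_zero_or_pos p with h0 | h1
    · subst h0; rw [ha, zero_mul]
    · rw [ih (i - p) (by omega), mul_zero]

lemma cpow_g_self : ∀ j, cpow g j j = 1 := by
  intro j
  induction j with
  | zero => rfl
  | succ j ih =>
    show conv g (cpow g j) (j+1) = 1
    unfold conv
    rw [Finset.sum_eq_single 1]
    · simp [g, ih]
    · intro p hp hp1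
      simp only [Finset.mem_range] at hp
      rcases Nat.eq_zero_or_pos p with h0 | h1
      · subst h0; simp [g]
      · have : j + 1 - p < j := by omega
        rw [cpow_vanish (by simp [g]) j _ this, mul_zero]
    · intro h; simp at h
lemma cpow_g_succ_self : ∀ j, cpow g j (j+1) = -(j:ℝ) := by
  intro j
  induction j with
  | zero => simp [cpow, g]
  | succ j ih =>
    show conv g (cpow g j) (j+2) = -(((j+1 : ℕ) : ℝ))
    push_cast
    unfold conv
    have hsub : ({1, 2} : Finset ℕ) ⊆ Finset.range (j+3) := by
      intro x hx
      simp only [Finset.mem_insert, Finset.mem_singleton] at hx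
      rcases hx with h | h <;> simp [h]
    rw [← Finset.sum_subset hsub]
    · rw [Finset.sum_pair (by norm_num)]
      have h1 : g 1 * cpow g j (2 - 1 + j) = -(j:ℝ) := by
        norm_num [g]
        rw [show 1 + j = j + 1 by ring, ih]
      have e1 : j + 2 - 1 = j + 1 := by omega
      have e2 : j + 2 - 2 = j := by omega
      rw [e1, e2, ih, cpow_g_self]
      simp [g]
      ring
    · intro p hp hp12
      simp only [Finset.mem_insert, Finset.mem_singleton] at hp12
      simp only [Finset.mem_range] at hp
      push_neg at hp12
      rcases Nat.eq_zero_or_pos p with h0 | h1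
      · subst h0; simp [g]
      · have : j + 2 - p < j := by omega
        rw [cpow_vanish (by simp [g]) j _ this, mul_zero]


lemma geo_identity : ∀ L : ℕ, ∀ n : ℕ, 1 ≤ n →
    1/((n:ℝ)+1) = (∑ i ∈ Finset.range (L+1), g i / (n:ℝ)^i)
      + (-1)^L / ((n:ℝ)^L * ((n:ℝ)+1)) := by
  intro L
  induction L with
  | zero =>
    intro n hn
    simp [g]
  | succ L ih =>
    intro n hn
    have hn0 : (0:ℝ) < (n:ℝ) := by exact_mod_cast hn
    rw [Finset.sum_range_succ, ih n hn]
    have hg : g (L+1) = (-1)^L := by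
      simp [g]
      rw [pow_succ, pow_succ]
      ring
    rw [hg]
    have : (-1:ℝ)^L / ((n:ℝ)^L * ((n:ℝ)+1))
        = (-1)^L / (n:ℝ)^(L+1) + (-1)^(L+1) / ((n:ℝ)^(L+1) * ((n:ℝ)+1)) := by
      rw [pow_succ, pow_succ]
      field_simp
      ring
    rw [this]
    ring

lemma expU_geo (L : ℕ) : ExpU (fun n => 1/((n:ℝ)+1)) g L := by
  refine ⟨1, fun n hn => ?_⟩
  have hn0 : (0:ℝ) < (n:ℝ) := by exact_mod_cast hn
  show |1/((n:ℝ)+1) - ∑ i ∈ Finset.range (L+1), g i / (n:ℝ)^i| ≤ 1 / (n:ℝ)^(L+1)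
  rw [geo_identity L n hn]
  have h1 : |(-1:ℝ)^L / ((n:ℝ)^L * ((n:ℝ)+1))| = 1 / ((n:ℝ)^L * ((n:ℝ)+1)) := by
    rw [abs_div, abs_pow, abs_neg, abs_one, one_pow, abs_of_pos (by positivity)]
  have : (∑ i ∈ Finset.range (L+1), g i / (n:ℝ)^i)
      + (-1)^L / ((n:ℝ)^L * ((n:ℝ)+1)) - (∑ i ∈ Finset.range (L+1), g i / (n:ℝ)^i)
      = (-1)^L / ((n:ℝ)^L * ((n:ℝ)+1)) := by ring
  rw [this, h1]
  rw [div_le_div_iff₀ (by positivity) (by positivity)]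
  rw [pow_succ]
  nlinarith [pow_pos hn0 L]

/-- Kronecker delta coefficients for `1/n^j` -/
def dk (j : ℕ) : ℕ → ℝ := fun i => if i = j then 1 else 0

lemma expU_xpow (j L : ℕ) : ExpU (fun n => 1/(n:ℝ)^j) (dk j) L := by
  refine ⟨1, fun n hn => ?_⟩
  have hn0 : (0:ℝ) < (n:ℝ) := by exact_mod_cast hn
  have hn1 : (1:ℝ) ≤ (n:ℝ) := by exact_mod_cast hn
  rcases le_or_gt j L with h | h
  · have : ∑ i ∈ Finset.range (L+1), dk j i / (n:ℝ)^i = 1/(n:ℝ)^j := by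
      rw [Finset.sum_eq_single j]
      · simp [dk]
      · intro i _ hij; simp [dk, hij]
      · intro hj; exfalso; exact hj (Finset.mem_range.mpr (by omega))
    rw [this]
    simp
  · have : ∑ i ∈ Finset.range (L+1), dk j i / (n:ℝ)^i = 0 := by
      refine Finset.sum_eq_zero fun i hi => ?_
      simp only [Finset.mem_range] at hi
      have : i ≠ j := by omega
      simp [dk, this]
    rw [this, sub_zero]
    show |1/(n:ℝ)^j| ≤ 1/(n:ℝ)^(L+1)
    rw [abs_of_pos (by positivity)]
    exact one_div_le_one_div_of_le (by positivity) (pow_le_pow_right₀ hn1 (by omega))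

lemma expU_geo_pow (j L : ℕ) :
    ExpU (fun n => (1/((n:ℝ)+1))^j) (cpow g j) L := by
  induction j with
  | zero =>
    refine expU_funext (F := fun _ => (1:ℝ)) (fun n _ => by norm_num) ?_
    have := expU_const 1 L
    exact expU_congr (fun j _ => by simp [cpow]) this
  | succ j ih =>
    have := expU_mul (expU_geo L) ih
    refine expU_funext (fun n hn => ?_) (expU_congr (fun i _ => rfl) this)
    rw [pow_succ]
    ring

/-- expansion of the telescoping difference `1/n^j - 1/(n+1)^j` -/
def dhc (j : ℕ) : ℕ → ℝ := fun i => dk j i - cpow g j i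

lemma dhc_vanish (j : ℕ) : ∀ i, i ≤ j → dhc j i = 0 := by
  intro i hi
  unfold dhc dk
  rcases eq_or_lt_of_le hi with h | h
  · subst h; simp [cpow_g_self]
  · simp [Nat.ne_of_lt h, cpow_vanish (by simp [g] : g 0 = 0) j i h]

lemma dhc_succ (j : ℕ) : dhc j (j+1) = (j:ℝ) := by
  unfold dhc dk
  simp [cpow_g_succ_self]

lemma expU_delta (j L : ℕ) :
    ExpU (fun n => 1/(n:ℝ)^j - 1/((n:ℝ)+1)^j) (dhc j) L := by
  have h2 : ExpU (fun n => (1/((n:ℝ)+1))^j) (cpow g j) L := expU_geo_pow j L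
  have h2' : ExpU (fun n => 1/((n:ℝ)+1)^j) (cpow g j) L :=
    expU_funext (fun n hn => by rw [div_pow, one_pow]) h2
  exact expU_sub (expU_xpow j L) h2'
/-- the summand of Stirling's log-difference -/
noncomputable def cfun (n : ℕ) : ℝ := ((n:ℝ) + 1/2) * Real.log (1 + 1/(n:ℝ)) - 1

/-- Taylor coefficients of `cfun` in `1/n` -/
noncomputable def e : ℕ → ℝ := fun i => (-1)^i * ((i:ℝ) - 1) / (2*i*(i+1))

lemma e_zero : e 0 = 0 := by norm_num [e]
lemma e_one : e 1 = 0 := by norm_num [e]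
lemma e_two : e 2 = 1/12 := by norm_num [e]

/-- partial sums of the Taylor series of `log (1+x)` -/
noncomputable def T (m : ℕ) (x : ℝ) : ℝ := ∑ i ∈ Finset.range m, (-1)^i * x^(i+1)/(i+1)

lemma log_taylor_bound {x : ℝ} (hx0 : 0 ≤ x) (hx1 : x < 1) (m : ℕ) :
    |Real.log (1+x) - T m x| ≤ x^(m+1)/(1-x) := by
  have h := Real.abs_log_sub_add_sum_range_le (x := -x) (by rw [abs_neg, abs_of_nonneg hx0]; exact hx1) m
  have h1 : ∑ i ∈ Finset.range m, (-x)^(i+1)/(i+1) = -T m x := by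
    unfold T
    rw [← Finset.sum_neg_distrib]
    refine Finset.sum_congr rfl fun i _ => ?_
    rw [neg_pow]
    rw [pow_succ]
    ring
  rw [h1, sub_neg_eq_add, abs_neg, abs_of_nonneg hx0] at h
  have h3 : Real.log (1+x) - T m x = -T m x + Real.log (1+x) := by ring
  rw [h3]
  exact h

lemma taylor_id : ∀ M : ℕ, ∀ x : ℝ, x ≠ 0 →
    (1/x + 1/2) * T (M+1) x - 1
      = (∑ i ∈ Finset.range (M+1), e i * x^i) + (-1)^M * x^(M+1)/(2*(M+1)) := by
  intro M
  induction M with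
  | zero =>
    intro x hx
    have hT1 : T 1 x = x := by unfold T; simp
    rw [hT1, Finset.sum_range_one, e_zero]
    norm_num
    field_simp
    ring
  | succ M ih =>
    intro x hx
    have hT : T (M+2) x = T (M+1) x + (-1)^(M+1) * x^(M+2)/(M+2) := by
      unfold T
      rw [Finset.sum_range_succ]
      congr 1
      push_cast
      ring
    rw [show M+1+1 = M+2 from rfl, hT, Finset.sum_range_succ]
    have expand : (1/x + 1/2) * (T (M+1) x + (-1)^(M+1) * x^(M+2)/(M+2)) - 1
        = ((1/x + 1/2) * T (M+1) x - 1)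
          + (1/x + 1/2) * ((-1)^(M+1) * x^(M+2)/(M+2)) := by ring
    rw [expand, ih x hx]
    generalize ∑ i ∈ Finset.range (M+1), e i * x^i = s
    have hM1 : ((M:ℝ)+1) ≠ 0 := by positivity
    have hM2 : ((M:ℝ)+2) ≠ 0 := by positivity
    unfold e
    push_cast
    field_simp
    ring
lemma expU_c (L : ℕ) : ExpU cfun e L := by
  have key : ∀ n : ℕ, 2 ≤ n →
      |cfun n - ∑ i ∈ Finset.range (L+1), e i / (n:ℝ)^i| ≤ 4 / (n:ℝ)^(L+1) := by
    intro n hn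
    have hn2 : (2:ℝ) ≤ (n:ℝ) := by exact_mod_cast hn
    have hn0 : (0:ℝ) < (n:ℝ) := by linarith
    set x : ℝ := 1/(n:ℝ) with hxdef
    have hx0 : 0 < x := by positivity
    have hx12 : x ≤ 1/2 := by
      rw [hxdef, div_le_div_iff₀ hn0 (by norm_num)]
      linarith
    have hx1 : x < 1 := by linarith
    have hinv : 1/x = (n:ℝ) := by rw [hxdef]; field_simp
    have hc : cfun n = (1/x + 1/2) * Real.log (1+x) - 1 := by
      unfold cfun
      rw [hinv]
    have hsum : ∑ i ∈ Finset.range (L+1), e i / (n:ℝ)^i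
        = ∑ i ∈ Finset.range (L+1), e i * x^i := by
      refine Finset.sum_congr rfl fun i _ => ?_
      rw [hxdef, div_pow, one_pow]
      ring
    have hr := log_taylor_bound hx0.le hx1 (L+1)
    have hid := taylor_id L x (ne_of_gt hx0)
    have dec : cfun n - ∑ i ∈ Finset.range (L+1), e i / (n:ℝ)^i
        = (1/x + 1/2) * (Real.log (1+x) - T (L+1) x)
          + (-1)^L * x^(L+1)/(2*(L+1)) := by
      rw [hc, hsum]
      have h9 : (1/x + 1/2) * Real.log (1+x) - 1
          = (1/x + 1/2) * (Real.log (1+x) - T (L+1) x)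
            + ((1/x + 1/2) * T (L+1) x - 1) := by ring
      rw [h9, hid]
      ring
    rw [dec]
    have hpos : 0 < 1/x + 1/2 := by positivity
    have hb : x^(L+1+1)/(1-x) ≤ 2 * x^(L+2) := by
      rw [div_le_iff₀ (by linarith)]
      nlinarith [pow_pos hx0 (L+2)]
    have hple : x^(L+2) ≤ x^(L+1) :=
      pow_le_pow_of_le_one hx0.le hx1.le (by omega)
    have b1 : |(1/x + 1/2) * (Real.log (1+x) - T (L+1) x)| ≤ 3 * x^(L+1) := by
      rw [abs_mul, abs_of_pos hpos]
      calc (1/x+1/2) * |Real.log (1+x) - T (L+1) x|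
          ≤ (1/x + 1/2) * (2*x^(L+2)) :=
            mul_le_mul_of_nonneg_left (hr.trans hb) hpos.le
        _ = 2*x^(L+1) + x^(L+2) := by
            rw [pow_succ x (L+1)]
            field_simp
        _ ≤ 2*x^(L+1) + x^(L+1) := by linarith
        _ = 3*x^(L+1) := by ring
    have b2 : |(-1:ℝ)^L * x^(L+1)/(2*(L+1))| ≤ x^(L+1) := by
      rw [abs_div, abs_mul, abs_pow, abs_neg, abs_one, one_pow, one_mul,
        abs_of_pos (pow_pos hx0 _), abs_of_pos (by positivity : (0:ℝ) < 2*((L:ℝ)+1))]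
      rw [div_le_iff₀ (by positivity)]
      nlinarith [pow_pos hx0 (L+1), Nat.cast_nonneg (α := ℝ) L]
    have hxn : x^(L+1) = 1/(n:ℝ)^(L+1) := by
      rw [hxdef, div_pow, one_pow]
    calc |(1/x + 1/2) * (Real.log (1+x) - T (L+1) x) + (-1)^L * x^(L+1)/(2*(L+1))|
        ≤ |(1/x + 1/2) * (Real.log (1+x) - T (L+1) x)|
          + |(-1:ℝ)^L * x^(L+1)/(2*(L+1))| := abs_add_le _ _
      _ ≤ 3*x^(L+1) + x^(L+1) := add_le_add b1 b2
      _ = 4 * (1/(n:ℝ)^(L+1)) := by rw [← hxn]; ring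
      _ = 4 / (n:ℝ)^(L+1) := by ring
  exact patch (N₀ := 2) ⟨4, key⟩

noncomputable def mu (n : ℕ) : ℝ := Real.log (Real.sqrt π / Stirling.stirlingSeq n)

lemma stirlingSeq_pos {n : ℕ} (hn : 1 ≤ n) : 0 < Stirling.stirlingSeq n := by
  obtain ⟨m, rfl⟩ := Nat.exists_eq_add_of_le hn
  simpa [Nat.add_comm] using Stirling.stirlingSeq'_pos m

lemma log_exp_div (x : ℝ) (hx : 0 < x) :
    Real.log (x / Real.exp 1) = Real.log x - 1 := by
  rw [Real.log_div (ne_of_gt hx) (ne_of_gt (Real.exp_pos 1)), Real.log_exp]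

lemma log_diff (n : ℕ) (hn : 1 ≤ n) :
    Real.log (Stirling.stirlingSeq n) - Real.log (Stirling.stirlingSeq (n+1)) = cfun n := by
  have hn0 : (0:ℝ) < (n:ℝ) := by exact_mod_cast hn
  have h1 : Real.log (1 + 1/(n:ℝ)) = Real.log ((n:ℝ)+1) - Real.log n := by
    rw [← Real.log_div (by positivity) (ne_of_gt hn0)]
    congr 1
    field_simp
  rw [Stirling.log_stirlingSeq_formula, Stirling.log_stirlingSeq_formula]
  unfold cfun
  rw [h1]
  have hfact : Real.log ((Nat.factorial (n+1) : ℕ) : ℝ)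
      = Real.log ((n:ℝ)+1) + Real.log ((Nat.factorial n : ℕ) : ℝ) := by
    rw [Nat.factorial_succ]
    push_cast
    rw [Real.log_mul (by positivity) (by
      have := Nat.factorial_pos n
      positivity)]
  have h2 : Real.log (2*((n:ℝ)+1)) = Real.log 2 + Real.log ((n:ℝ)+1) :=
    Real.log_mul two_ne_zero (by positivity)
  have h3 : Real.log (2*(n:ℝ)) = Real.log 2 + Real.log n :=
    Real.log_mul two_ne_zero (ne_of_gt hn0)
  have h4 := log_exp_div ((n:ℝ)) hn0
  have h5 := log_exp_div ((n:ℝ)+1) (by positivity)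
  push_cast
  rw [hfact]
  push_cast
  rw [h2, h3, h4, h5]
  ring

lemma mu_diff (n : ℕ) (hn : 1 ≤ n) : mu n - mu (n+1) = -(cfun n) := by
  have hs1 : 0 < Stirling.stirlingSeq n := stirlingSeq_pos hn
  have hs2 : 0 < Stirling.stirlingSeq (n+1) := stirlingSeq_pos (by omega)
  have hpi : (0:ℝ) < Real.sqrt π := Real.sqrt_pos.mpr Real.pi_pos
  unfold mu
  rw [Real.log_div (ne_of_gt hpi) (ne_of_gt hs1),
    Real.log_div (ne_of_gt hpi) (ne_of_gt hs2)]
  rw [← log_diff n hn]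
  ring

lemma mu_tendsto : Filter.Tendsto mu atTop (𝓝 0) := by
  have hpi : Real.sqrt π ≠ 0 := ne_of_gt (Real.sqrt_pos.mpr Real.pi_pos)
  have h1 : Filter.Tendsto (fun n => Real.sqrt π / Stirling.stirlingSeq n) atTop (𝓝 1) := by
    have h := Filter.Tendsto.div (tendsto_const_nhds (x := Real.sqrt π))
      Stirling.tendsto_stirlingSeq_sqrt_pi hpi
    exact (by simpa [div_self hpi] using h : Tendsto ((fun _ => Real.sqrt π) / Stirling.stirlingSeq) atTop (𝓝 1))
  have h2 : Filter.Tendsto (fun n => Real.log (Real.sqrt π / Stirling.stirlingSeq n))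
      atTop (𝓝 (Real.log 1)) :=
    ((Real.continuousAt_log one_ne_zero).tendsto.comp h1)
  exact (by simpa [Real.log_one] using h2 : Tendsto (fun n => Real.log (Real.sqrt π / Stirling.stirlingSeq n)) atTop (𝓝 0))

noncomputable def S (a : ℕ → ℝ) (K : ℕ) (n : ℕ) : ℝ :=
  ∑ j ∈ Finset.range (K+1), a j / (n:ℝ)^j

noncomputable def dd (a : ℕ → ℝ) (K : ℕ) (n : ℕ) : ℝ :=
  (mu n - mu (n+1)) - (S a K n - S a K (n+1))

lemma key_induction : ∀ K : ℕ, ∃ a : ℕ → ℝ, a 0 = 0 ∧ (∀ j, K < j → a j = 0) ∧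
    ∀ L, ∃ ε : ℕ → ℝ, (∀ i, i ≤ K+1 → ε i = 0) ∧ ExpU (dd a K) ε L := by
  intro K
  induction K with
  | zero =>
    refine ⟨fun _ => 0, rfl, fun j _ => rfl, fun L => ?_⟩
    refine ⟨fun i => -(e i), fun i hi => ?_, ?_⟩
    · interval_cases i
      · show -(e 0) = 0
        rw [e_zero]; ring
      · show -(e 1) = 0
        rw [e_one]; ring
    · have h := expU_smul (-1) (expU_c L)
      refine expU_funext (fun n hn => ?_) (expU_congr (fun i _ => by ring) h)
      unfold dd S
      have h0 : ∀ m : ℕ, ∑ j ∈ Finset.range (0+1), (0:ℝ) / (m:ℝ)^j = 0 := by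
        intro m; simp
      rw [h0 n, h0 (n+1), mu_diff n hn]
      ring
  | succ K ih =>
    obtain ⟨a, ha0, hvan, hdd⟩ := ih
    obtain ⟨ε, hε0, hεE⟩ := hdd (K+2)
    set δ : ℝ := ε (K+2) with hδ
    set α : ℝ := δ / ((K:ℝ)+1) with hα
    set a' : ℕ → ℝ := fun j => if j = K+1 then α else a j with ha'
    have ha'0 : a' 0 = 0 := by simp [ha', ha0]
    have ha'van : ∀ j, K+1 < j → a' j = 0 := by
      intro j hj
      simp only [ha']
      rw [if_neg (by omega)]
      exact hvan j (by omega)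
    have hS' : ∀ n : ℕ, S a' (K+1) n = S a K n + α / (n:ℝ)^(K+1) := by
      intro n
      unfold S
      rw [Finset.sum_range_succ]
      congr 1
      · refine Finset.sum_congr rfl fun j hj => ?_
        simp only [Finset.mem_range] at hj
        simp only [ha']
        rw [if_neg (by omega)]
      · simp [ha']
    have hdd' : ∀ n : ℕ, dd a' (K+1) n
        = dd a K n - α * (1/(n:ℝ)^(K+1) - 1/((n:ℝ)+1)^(K+1)) := by
      intro n
      unfold dd
      rw [hS', hS']
      push_cast
      ring
    refine ⟨a', ha'0, ha'van, fun L' => ?_⟩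
    set L : ℕ := max L' (K+2) with hL
    obtain ⟨εL, hεL0, hεLE⟩ := hdd L
    have hagree : ∀ i, i ≤ K+2 → εL i = ε i := fun i hi =>
      expU_unique hεLE hεE i (le_trans hi (le_max_right _ _)) hi
    set ε' : ℕ → ℝ := fun i => εL i - α * dhc (K+1) i with hε'
    have hε'0 : ∀ i, i ≤ K+1+1 → ε' i = 0 := by
      intro i hi
      simp only [hε']
      rcases Nat.lt_or_ge i (K+2) with h | h
      · rw [hagree i (by omega), hε0 i (by omega), dhc_vanish (K+1) i (by omega)]
        ring
      · have hi2 : i = K+2 := by omega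
        subst hi2
        rw [hagree (K+2) le_rfl, dhc_succ (K+1)]
        push_cast
        rw [hα]
        have : ((K:ℝ)+1) ≠ 0 := by positivity
        field_simp
        rw [hδ]; ring
    have hE : ExpU (dd a' (K+1)) ε' L := by
      have hdelta := expU_smul α (expU_delta (K+1) L)
      have := expU_sub hεLE hdelta
      refine expU_funext (fun n hn => ?_) (expU_congr (fun i _ => rfl) this)
      rw [hdd' n]
    exact ⟨ε', hε'0, expU_of_le hE (le_max_left _ _)⟩

lemma S_tendsto {a : ℕ → ℝ} (ha0 : a 0 = 0) (K : ℕ) :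
    Filter.Tendsto (fun n => S a K n) atTop (𝓝 0) := by
  have h : ∀ j ∈ Finset.range (K+1),
      Filter.Tendsto (fun n : ℕ => a j / (n:ℝ)^j) atTop (𝓝 0) := by
    intro j _
    rcases Nat.eq_zero_or_pos j with h0 | h1
    · subst h0
      simpa [ha0] using (tendsto_const_nhds : Filter.Tendsto (fun _ : ℕ => (0:ℝ)) atTop _)
    · have hpow : Filter.Tendsto (fun n : ℕ => ((n:ℝ))^j) atTop atTop :=
        (tendsto_pow_atTop (by omega)).comp tendsto_natCast_atTop_atTop
      exact Filter.Tendsto.div_atTop tendsto_const_nhds hpow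
  have hsum := tendsto_finset_sum (Finset.range (K+1)) h
  simpa [S] using hsum

lemma expU_mu_of_P {a : ℕ → ℝ} {K : ℕ} (ha0 : a 0 = 0)
    (hdd : ∃ ε : ℕ → ℝ, (∀ i, i ≤ K+1 → ε i = 0) ∧ ExpU (dd a K) ε (K+1)) :
    ExpU mu a K := by
  obtain ⟨ε, hε0, C, hC⟩ := hdd
  have hzero : ∀ n : ℕ, ∑ i ∈ Finset.range (K+1+1), ε i / (n:ℝ)^i = 0 :=
    fun n => Finset.sum_eq_zero fun i hi => by
      rw [hε0 i (by simpa [Nat.lt_succ_iff] using hi)]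
      simp
  have hd : ∀ n : ℕ, 1 ≤ n →
      |(fun m => mu m - S a K m) n - (fun m => mu m - S a K m) (n+1)| ≤ C / (n:ℝ)^(K+2) := by
    intro n hn
    have h1 := hC n hn
    rw [hzero n, sub_zero] at h1
    have h2 : (fun m => mu m - S a K m) n - (fun m => mu m - S a K m) (n+1) = dd a K n := by
      simp only [dd]
      ring
    rw [h2]
    exact h1
  have h0 : Filter.Tendsto (fun n => mu n - S a K n) atTop (𝓝 0) := by
    have := mu_tendsto.sub (S_tendsto ha0 K)
    simpa using this
  have hfin := telescope (t := K) h0 hd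
  exact ⟨2*C, fun n hn => by
    have := hfin n hn
    simpa [S] using this⟩

noncomputable def A (K : ℕ) : ℕ → ℝ := (key_induction K).choose

lemma A_zero (K : ℕ) : A K 0 = 0 := (key_induction K).choose_spec.1

lemma expU_mu_A (K : ℕ) : ExpU mu (A K) K := by
  obtain ⟨h1, _, h3⟩ := (key_induction K).choose_spec
  exact expU_mu_of_P h1 (h3 (K+1))

noncomputable def aseq (k : ℕ) : ℝ := A k k

lemma expU_mu_aseq (K : ℕ) : ExpU mu aseq K :=
  expU_congr (fun j hj => expU_unique (expU_mu_A K) (expU_mu_A j) j hj le_rfl) (expU_mu_A K)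

lemma aseq_zero : aseq 0 = 0 := A_zero 0

lemma expU_mu_one : ExpU mu (fun j => if j = 1 then (-1/12 : ℝ) else 0) 1 := by
  set a1 : ℕ → ℝ := fun j => if j = 1 then (-1/12 : ℝ) else 0 with ha1
  have hS : ∀ n : ℕ, S a1 1 n = (-1/12) / (n:ℝ) := by
    intro n
    unfold S
    rw [Finset.sum_range_succ, Finset.sum_range_one]
    simp [ha1]
  obtain ⟨C, hC⟩ := expU_c 2
  have hd : ∀ n : ℕ, 1 ≤ n →
      |(fun m => mu m - S a1 1 m) n - (fun m => mu m - S a1 1 m) (n+1)|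
        ≤ (C + 1/12) / (n:ℝ)^(1+2) := by
    intro n hn
    have hn0 : (0:ℝ) < (n:ℝ) := by exact_mod_cast hn
    have hce := hC n hn
    have hsum3 : ∑ i ∈ Finset.range (2+1), e i/(n:ℝ)^i = (1/12)/(n:ℝ)^2 := by
      rw [Finset.sum_range_succ, Finset.sum_range_succ, Finset.sum_range_one,
        e_zero, e_one, e_two]
      ring
    rw [hsum3] at hce
    have hmu := mu_diff n hn
    have heq : (fun m => mu m - S a1 1 m) n - (fun m => mu m - S a1 1 m) (n+1)
        = -(cfun n - (1/12)/(n:ℝ)^2) + (-(1/12) / ((n:ℝ)^2*((n:ℝ)+1))) := by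
      simp only
      rw [hS n, hS (n+1)]
      push_cast
      have : mu n - mu (n+1) = -(cfun n) := mu_diff n hn
      rw [sub_sub_sub_comm, this]
      field_simp
      ring
    rw [heq]
    have b2 : |(-(1/12) / ((n:ℝ)^2*((n:ℝ)+1)))| ≤ (1/12)/(n:ℝ)^3 := by
      rw [abs_div, abs_neg, abs_of_pos (by norm_num : (0:ℝ) < 1/12),
        abs_of_pos (by positivity)]
      rw [div_le_div_iff₀ (by positivity) (by positivity)]
      nlinarith [pow_pos hn0 2, pow_pos hn0 3]
    calc |-(cfun n - (1/12)/(n:ℝ)^2) + (-(1/12) / ((n:ℝ)^2*((n:ℝ)+1)))|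
        ≤ |-(cfun n - (1/12)/(n:ℝ)^2)| + |(-(1/12) / ((n:ℝ)^2*((n:ℝ)+1)))| := abs_add_le _ _
      _ ≤ C/(n:ℝ)^3 + (1/12)/(n:ℝ)^3 := by
          rw [abs_neg]
          exact add_le_add hce b2
      _ = (C + 1/12) / (n:ℝ)^(1+2) := by
          norm_num
          ring
  have h0 : Filter.Tendsto (fun n => mu n - S a1 1 n) atTop (𝓝 0) := by
    have := mu_tendsto.sub (S_tendsto (a := a1) (by rw [ha1]; norm_num) 1)
    simpa using this
  have hfin := telescope (t := 1) h0 hd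
  exact ⟨2*(C+1/12), fun n hn => by
    have := hfin n hn
    simpa [S] using this⟩

lemma aseq_one : aseq 1 = -1/12 := by
  have h := expU_unique (expU_mu_aseq 1) expU_mu_one 1 le_rfl le_rfl
  exact h.trans (by norm_num)

lemma expU_sum_range {F : ℕ → ℕ → ℝ} {A : ℕ → ℕ → ℝ} {K : ℕ} (M : ℕ)
    (h : ∀ m, m < M → ExpU (F m) (A m) K) :
    ExpU (fun n => ∑ m ∈ Finset.range M, F m n) (fun i => ∑ m ∈ Finset.range M, A m i) K := by
  induction M with
  | zero =>
    refine expU_congr (fun j _ => by simp) (expU_const 0 K)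
    -- coefficients : (if j = 0 then 0 else 0) → 0-sum
  | succ M ih =>
    have h1 := ih (fun m hm => h m (by omega))
    have h2 := h M (by omega)
    have := expU_add h1 h2
    refine expU_funext (fun n hn => ?_) (expU_congr (fun i _ => (Finset.sum_range_succ _ _).symm) this)
    rw [Finset.sum_range_succ]

lemma expU_mu_pow (m K : ℕ) : ExpU (fun n => (mu n)^m) (cpow aseq m) K := by
  induction m with
  | zero =>
    refine expU_funext (F := fun _ => (1:ℝ)) (fun n _ => by norm_num) ?_
    exact expU_congr (fun j _ => by simp [cpow]) (expU_const 1 K)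
  | succ m ih =>
    have := expU_mul (expU_mu_aseq K) ih
    refine expU_funext (fun n hn => ?_) (expU_congr (fun i _ => rfl) this)
    rw [pow_succ]
    ring

/-- final coefficients : Stirling series -/
noncomputable def bcoef (i : ℕ) : ℝ := ∑ m ∈ Finset.range (i+1), cpow aseq m i / (Nat.factorial m : ℝ)

lemma bcoef_zero : bcoef 0 = 1 := by
  unfold bcoef
  rw [Finset.sum_range_one]
  simp [cpow]

lemma bcoef_one : bcoef 1 = -1/12 := by
  unfold bcoef
  rw [Finset.sum_range_succ, Finset.sum_range_one]
  have h1 : cpow aseq 0 1 = 0 := by simp [cpow]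
  have h2 : cpow aseq 1 1 = aseq 1 := by
    show conv aseq (cpow aseq 0) 1 = aseq 1
    unfold conv
    rw [Finset.sum_range_succ, Finset.sum_range_one]
    simp [cpow, aseq_zero]
  rw [h1, h2, aseq_one]
  norm_num

lemma expU_exp_mu (k : ℕ) : ExpU (fun n => Real.exp (mu n)) bcoef k := by
  -- bound on mu
  obtain ⟨Cm, hCm⟩ := expU_mu_aseq 0
  have hmu_bound : ∀ n : ℕ, 1 ≤ n → |mu n| ≤ |Cm| / (n:ℝ) := by
    intro n hn
    have h := hCm n hn
    have hs : ∑ j ∈ Finset.range (0+1), aseq j / (n:ℝ)^j = 0 := by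
      rw [Finset.sum_range_one, aseq_zero]
      simp
    rw [hs, sub_zero] at h
    calc |mu n| ≤ Cm / (n:ℝ)^(0+1) := h
      _ ≤ |Cm| / (n:ℝ) := by
          have hnp : (0:ℝ) < (n:ℝ) := by exact_mod_cast hn
          have h1 : (n:ℝ)^(0+1) = (n:ℝ) := pow_one _
          rw [h1, div_le_div_iff₀ hnp hnp]
          nlinarith [le_abs_self Cm]
  -- remainder of the exponential series
  have hrem : ∃ C : ℝ, ∀ n : ℕ, 1 ≤ n →
      |Real.exp (mu n) - ∑ m ∈ Finset.range (k+1), (mu n)^m / (Nat.factorial m : ℝ)|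
        ≤ C / (n:ℝ)^(k+1) := by
    set N₀ : ℕ := Nat.ceil (|Cm|) + 1 with hN₀
    refine patch (N₀ := N₀) ⟨|Cm|^(k+1) * ((k+2) / ((Nat.factorial (k+1) : ℝ) * (k+1))), ?_⟩
    intro n hn
    have hn1 : 1 ≤ n := by
      have : 1 ≤ N₀ := by omega
      omega
    have hnr : (1:ℝ) ≤ (n:ℝ) := by exact_mod_cast hn1
    have hnp : (0:ℝ) < (n:ℝ) := by linarith
    have hCmn : |Cm| ≤ (n:ℝ) := by
      have h1 : |Cm| ≤ (Nat.ceil (|Cm|) : ℝ) := Nat.le_ceil _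
      have h2 : (N₀:ℕ) ≤ n := hn
      have : ((Nat.ceil (|Cm|) : ℕ) : ℝ) + 1 ≤ (n:ℝ) := by
        exact_mod_cast h2
      linarith
    have hmu1 : |mu n| ≤ 1 := by
      refine (hmu_bound n hn1).trans ?_
      rw [div_le_one hnp]
      exact hCmn
    have hb := Real.exp_bound hmu1 (n := k+1) (by omega)
    refine hb.trans ?_
    have hmono : |mu n|^(k+1) ≤ (|Cm| / (n:ℝ))^(k+1) :=
      pow_le_pow_left₀ (abs_nonneg _) (hmu_bound n hn1) (k+1)
    have hpos : (0:ℝ) ≤ ((k+1+1 : ℕ) : ℝ) / ((Nat.factorial (k+1) : ℝ) * ((k+1 : ℕ) : ℝ)) := by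
      positivity
    calc |mu n|^(k+1) * (((k+1).succ : ℝ) / ((Nat.factorial (k+1) : ℝ) * ((k+1 : ℕ) : ℝ)))
        ≤ (|Cm| / (n:ℝ))^(k+1) * (((k+1).succ : ℝ) / ((Nat.factorial (k+1) : ℝ) * ((k+1 : ℕ) : ℝ))) := by
          refine mul_le_mul_of_nonneg_right hmono ?_
          positivity
      _ = |Cm|^(k+1) * (((k:ℝ)+2) / ((Nat.factorial (k+1) : ℝ) * ((k:ℝ)+1))) / (n:ℝ)^(k+1) := by
          rw [div_pow]
          push_cast
          ring
  -- the truncated exponential sum expands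
  have hsum : ExpU (fun n => ∑ m ∈ Finset.range (k+1), (mu n)^m / (Nat.factorial m : ℝ))
      (fun i => ∑ m ∈ Finset.range (k+1), cpow aseq m i / (Nat.factorial m : ℝ)) k := by
    have h := expU_sum_range (F := fun m n => (1/(Nat.factorial m : ℝ)) * (mu n)^m)
      (A := fun m i => (1/(Nat.factorial m : ℝ)) * cpow aseq m i) (K := k) (k+1)
      (fun m _ => expU_smul _ (expU_mu_pow m k))
    refine expU_funext (fun n hn => ?_) (expU_congr (fun i _ => Finset.sum_congr rfl fun m _ => by ring) h)
    exact Finset.sum_congr rfl fun m _ => by ring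
  have hclose := expU_of_close hsum hrem
  refine expU_congr (fun i hi => ?_) hclose
  unfold bcoef
  refine (Finset.sum_subset (Finset.range_subset_range.mpr (by omega)) ?_).symm
  intro m hm hm2
  simp only [Finset.mem_range, not_lt] at hm2
  rw [cpow_vanish aseq_zero m i (by omega)]
  simp

lemma final_identity (n : ℕ) (hn : 1 ≤ n) :
    (n:ℝ)^n * Real.exp (-(n:ℝ)) / (Nat.factorial (n-1) : ℝ)
      = Real.sqrt ((n:ℝ)/(2*π)) * Real.exp (mu n) := by
  have hn0 : (0:ℝ) < (n:ℝ) := by exact_mod_cast hn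
  have hs : 0 < Stirling.stirlingSeq n := stirlingSeq_pos hn
  have hpi : (0:ℝ) < π := Real.pi_pos
  have hexp : Real.exp (mu n) = Real.sqrt π / Stirling.stirlingSeq n := by
    unfold mu
    rw [Real.exp_log (by positivity)]
  rw [hexp]
  have hfac1 : (0:ℝ) < (Nat.factorial (n-1) : ℝ) := by exact_mod_cast Nat.factorial_pos _
  have hfacn : (0:ℝ) < (Nat.factorial n : ℝ) := by exact_mod_cast Nat.factorial_pos _
  have hfact : ((Nat.factorial n : ℕ) : ℝ) = (n:ℝ) * ((Nat.factorial (n-1) : ℕ) : ℝ) := by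
    rw [← Nat.mul_factorial_pred (by omega)]
    push_cast
    ring
  have hpow : ((n:ℝ)/Real.exp 1)^n = (n:ℝ)^n * Real.exp (-(n:ℝ)) := by
    rw [div_pow, Real.exp_one_pow, Real.exp_neg]
    rw [div_eq_mul_inv]
  have hsq : Real.sqrt ((n:ℝ)/(2*π)) * (Real.sqrt π * Real.sqrt (2*(n:ℝ))) = (n:ℝ) := by
    rw [← Real.sqrt_mul hpi.le, ← Real.sqrt_mul (by positivity)]
    rw [show (n:ℝ)/(2*π)*(π*(2*(n:ℝ))) = (n:ℝ)^2 by field_simp]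
    exact Real.sqrt_sq hn0.le
  have hSdef : Stirling.stirlingSeq n
      = (Nat.factorial n : ℝ) / (Real.sqrt (2*(n:ℝ)) * ((n:ℝ)/Real.exp 1)^n) := rfl
  rw [hSdef, div_div_eq_mul_div]
  rw [hfact, hpow]
  rw [← mul_div_assoc, div_eq_div_iff (ne_of_gt hfac1) (by positivity)]
  calc (n:ℝ)^n * Real.exp (-(n:ℝ)) * ((n:ℝ) * ((Nat.factorial (n-1) : ℕ) : ℝ))
      = ((n:ℝ)) * ((n:ℝ)^n * Real.exp (-(n:ℝ))) * ((Nat.factorial (n-1) : ℕ) : ℝ) := by ring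
    _ = (Real.sqrt ((n:ℝ)/(2*π)) * (Real.sqrt π * Real.sqrt (2*(n:ℝ))))
          * ((n:ℝ)^n * Real.exp (-(n:ℝ))) * ((Nat.factorial (n-1) : ℕ) : ℝ) := by rw [hsq]
    _ = Real.sqrt ((n:ℝ)/(2*π)) * (Real.sqrt π * (Real.sqrt (2*(n:ℝ))
          * ((n:ℝ)^n * Real.exp (-(n:ℝ))))) * ((Nat.factorial (n-1) : ℕ) : ℝ) := by ring

end StirlingAux

/-- Stirling's series: there are real numbers `b 0 = 1`, `b 1 = −1/12`, … such that for
every `k` there is a constant `C_k` with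
`|nⁿe^{−n}/(n−1)! − √(n/(2π))·(b₀ + b₁/n + ⋯ + b_k/n^k)| ≤ C_k·√(n/(2π))·n^{−k−1}`
for all positive integers `n`. -/
theorem stirling_series_expansion :
    ∃ b : ℕ → ℝ, b 0 = 1 ∧ b 1 = -1 / 12 ∧
      ∀ k : ℕ, ∃ C : ℝ, ∀ n : ℕ, 1 ≤ n →
        |(n : ℝ) ^ n * Real.exp (-(n : ℝ)) / (Nat.factorial (n - 1) : ℝ) -
            Real.sqrt ((n : ℝ) / (2 * Real.pi)) *
              ∑ j ∈ Finset.range (k + 1), b j / (n : ℝ) ^ j| ≤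
          C * Real.sqrt ((n : ℝ) / (2 * Real.pi)) / (n : ℝ) ^ (k + 1) := by

  refine ⟨StirlingAux.bcoef, StirlingAux.bcoef_zero, by
    rw [StirlingAux.bcoef_one], ?_⟩
  intro k
  obtain ⟨C, hC⟩ := StirlingAux.expU_exp_mu k
  refine ⟨C, fun n hn => ?_⟩
  have hid := StirlingAux.final_identity n hn
  have hsq0 : 0 ≤ Real.sqrt ((n:ℝ)/(2*Real.pi)) := Real.sqrt_nonneg _
  rw [hid, ← mul_sub, abs_mul, abs_of_nonneg hsq0]
  calc Real.sqrt ((n:ℝ)/(2*Real.pi))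
        * |Real.exp (StirlingAux.mu n)
            - ∑ j ∈ Finset.range (k+1), StirlingAux.bcoef j / (n:ℝ)^j|
      ≤ Real.sqrt ((n:ℝ)/(2*Real.pi)) * (C / (n:ℝ)^(k+1)) :=
        mul_le_mul_of_nonneg_left (hC n hn) hsq0
    _ = C * Real.sqrt ((n:ℝ)/(2*Real.pi)) / (n:ℝ)^(k+1) := by ring
end

section
/- lim_{n→∞} e^{−n}·∑_{j=0}^{n−1} n^j/j! = 1/2. Equivalently, for every z ∈ ℂ with |z| = 1, the diagonal of the Ginibre kernel satisfies K_n(z,z) = (n/2)·(1 + o(1)) as n → ∞. -/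
open Complex Filter

namespace GinAux
open Finset Real

noncomputable def c (n j : ℕ) : ℝ := (n:ℝ) ^ j / (Nat.factorial j : ℝ)
noncomputable def A (n k : ℕ) : ℝ := ∏ i ∈ Finset.range k, (n:ℝ) / ((n:ℝ) + (i:ℝ) + 1)
noncomputable def B (n k : ℕ) : ℝ := ∏ i ∈ Finset.range k, ((n - (i+1) : ℕ) : ℝ) / (n:ℝ)
noncomputable def K (n : ℕ) : ℕ := ⌈Real.sqrt (8*n*Real.log n)⌉₊

lemma summable_c (n : ℕ) : Summable (c n) := Real.summable_pow_div_factorial n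

lemma tsum_c (n : ℕ) : ∑' j, c n j = Real.exp n := by
  rw [Real.exp_eq_exp_ℝ, NormedSpace.exp_eq_tsum_div]; rfl

lemma c_shift (n k : ℕ) : c n (n + k) = c n n * A n k := by
  induction k with
  | zero => simp [A]
  | succ k ih =>
    have h1 : ((n + k).factorial : ℝ) ≠ 0 := Nat.cast_ne_zero.mpr (Nat.factorial_ne_zero _)
    have h2 : ((n:ℝ) + (k:ℝ) + 1) ≠ 0 := by positivity
    rw [show n + (k+1) = (n+k) + 1 by ring]
    unfold c A at *
    rw [prod_range_succ, ← mul_assoc, ← ih, pow_succ, Nat.factorial_succ]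
    push_cast
    rw [div_mul_div_comm]
    congr 1
    ring

lemma c_reflect (n : ℕ) : ∀ k, k < n → c n (n - 1 - k) = c n n * B n k := by
  intro k
  induction k with
  | zero =>
    intro hk
    obtain ⟨m, rfl⟩ := Nat.exists_eq_succ_of_ne_zero (Nat.pos_iff_ne_zero.mp hk)
    have h1 : ((m).factorial : ℝ) ≠ 0 := Nat.cast_ne_zero.mpr (Nat.factorial_ne_zero _)
    simp only [B, range_zero, prod_empty, mul_one, Nat.succ_sub_one, Nat.sub_zero]
    unfold c
    rw [Nat.factorial_succ, pow_succ]
    push_cast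
    field_simp
  | succ k ih =>
    intro hk
    have hk' : k < n := Nat.lt_of_succ_lt hk
    set m := n - 1 - (k+1) with hm
    have e1 : m + 1 = n - 1 - k := by omega
    have e2 : n - (k+1) = m + 1 := by omega
    have hn0 : ((n:ℝ)) ≠ 0 := Nat.cast_ne_zero.mpr (by omega)
    have hstep : c n (m+1) = c n m * ((n:ℝ)/((m:ℝ)+1)) := by
      unfold c
      rw [pow_succ, Nat.factorial_succ, div_mul_div_comm]
      congr 1 <;> push_cast <;> ring
    have hm1 : ((m:ℝ)+1) ≠ 0 := by positivity
    have hgoal : c n m = c n (m+1) * (((m:ℝ)+1)/(n:ℝ)) := by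
      rw [hstep]; field_simp
    rw [hgoal, e1, ih hk']
    unfold B
    rw [prod_range_succ, e2]
    push_cast
    ring

lemma afac_le_one (n s : ℕ) : (n:ℝ) / ((n:ℝ) + s) ≤ 1 := by
  rcases Nat.eq_zero_or_pos n with h | h
  · simp [h]
  · have : (0:ℝ) < n := by exact_mod_cast h
    rw [div_le_one (by positivity)]; linarith [Nat.cast_nonneg (α := ℝ) s]

lemma bfac_le_afac (n s : ℕ) (hn : 1 ≤ n) : ((n - s : ℕ) : ℝ) / (n:ℝ) ≤ (n:ℝ) / ((n:ℝ) + s) := by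
  have hn' : (0:ℝ) < n := by exact_mod_cast hn
  have hns : (0:ℝ) < (n:ℝ) + s := by positivity
  rw [div_le_div_iff₀ hn' hns]
  rcases le_or_gt s n with h | h
  · have : ((n - s : ℕ) : ℝ) = (n:ℝ) - s := by push_cast [h]; ring
    rw [this]
    nlinarith [Nat.cast_nonneg (α := ℝ) s]
  · rw [Nat.sub_eq_zero_of_le h.le]
    push_cast
    nlinarith

lemma afac_sub_bfac (n s : ℕ) (hn : 1 ≤ n) (hs : s ≤ n) :
    (n:ℝ) / ((n:ℝ) + s) - ((n - s : ℕ) : ℝ) / (n:ℝ) ≤ (s:ℝ)^2 / (n:ℝ)^2 := by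
  have hn' : (0:ℝ) < n := by exact_mod_cast hn
  have hns : (0:ℝ) < (n:ℝ) + s := by positivity
  have hcast : ((n - s : ℕ) : ℝ) = (n:ℝ) - s := by push_cast [hs]; ring
  have hs0 : (0:ℝ) ≤ s := Nat.cast_nonneg s
  rw [hcast, div_sub_div _ _ (ne_of_gt hns) (ne_of_gt hn'),
    div_le_div_iff₀ (by positivity) (by positivity)]
  nlinarith [mul_nonneg (mul_nonneg (mul_nonneg hs0 hs0) hs0) hn'.le]

lemma exp_half_le {x : ℝ} (h0 : 0 ≤ x) (h1 : x ≤ 1) : Real.exp (x/2) ≤ 1 + x := by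
  have h2 : 1 - x/2 ≤ Real.exp (-(x/2)) := by
    have := Real.add_one_le_exp (-(x/2)); linarith
  have h3 : (0:ℝ) < 1 - x/2 := by linarith
  have hprod : Real.exp (x/2) * Real.exp (-(x/2)) = 1 := by rw [← Real.exp_add]; simp
  nlinarith [Real.exp_pos (x/2), mul_le_mul_of_nonneg_left h2 (Real.exp_pos (x/2)).le]

lemma afac_le_exp (n s : ℕ) (hn : 1 ≤ n) (hs : s ≤ n) :
    (n:ℝ) / ((n:ℝ) + s) ≤ Real.exp (-((s:ℝ)/(2*n))) := by
  have hn' : (0:ℝ) < n := by exact_mod_cast hn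
  have hns : (0:ℝ) < (n:ℝ) + s := by positivity
  have hx0 : (0:ℝ) ≤ (s:ℝ)/(n:ℝ) := by positivity
  have hx1 : (s:ℝ)/(n:ℝ) ≤ 1 := by rw [div_le_one hn']; exact_mod_cast hs
  have hx := exp_half_le hx0 hx1
  have e : (s:ℝ)/(2*n) = ((s:ℝ)/(n:ℝ))/2 := by ring
  have key : (n:ℝ) * Real.exp ((s:ℝ)/(2*n)) ≤ (n:ℝ) + s := by
    rw [e]
    calc (n:ℝ) * Real.exp (((s:ℝ)/(n:ℝ))/2) ≤ n * (1 + (s:ℝ)/(n:ℝ)) :=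
          mul_le_mul_of_nonneg_left hx hn'.le
      _ = (n:ℝ) + s := by field_simp
  rw [div_le_iff₀ hns]
  have h2 := mul_le_mul_of_nonneg_left key (Real.exp_pos (-((s:ℝ)/(2*n)))).le
  have hprod : Real.exp (-((s:ℝ)/(2*n))) * Real.exp ((s:ℝ)/(2*n)) = 1 := by
    rw [← Real.exp_add]; simp
  nlinarith [h2, hprod]

lemma cast_fac (n i : ℕ) : (n:ℝ) + (i:ℝ) + 1 = (n:ℝ) + ((i+1 : ℕ):ℝ) := by push_cast; ring

lemma A_nonneg (n k : ℕ) : 0 ≤ A n k := prod_nonneg fun i _ => by positivity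

lemma A_le_one (n k : ℕ) : A n k ≤ 1 :=
  prod_le_one (fun i _ => by positivity) (fun i _ => by rw [cast_fac]; exact afac_le_one n (i+1))

lemma B_nonneg (n k : ℕ) : 0 ≤ B n k := prod_nonneg fun i _ => by positivity

lemma B_le_A (n k : ℕ) (hn : 1 ≤ n) : B n k ≤ A n k :=
  prod_le_prod (fun i _ => by positivity)
    (fun i _ => by rw [cast_fac]; exact bfac_le_afac n (i+1) hn)

lemma prod_sub_prod_le (k : ℕ) (a b : ℕ → ℝ) (hb : ∀ i, 0 ≤ b i) (hba : ∀ i, b i ≤ a i)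
    (ha : ∀ i, a i ≤ 1) :
    ∏ i ∈ range k, a i - ∏ i ∈ range k, b i ≤ ∑ i ∈ range k, (a i - b i) := by
  induction k with
  | zero => simp
  | succ k ih =>
    rw [prod_range_succ, prod_range_succ, sum_range_succ]
    have hPb : 0 ≤ ∏ i ∈ range k, b i := prod_nonneg fun i _ => hb i
    have hPb1 : ∏ i ∈ range k, b i ≤ 1 :=
      prod_le_one (fun i _ => hb i) (fun i _ => (hba i).trans (ha i))
    have hPba : ∏ i ∈ range k, b i ≤ ∏ i ∈ range k, a i :=
      prod_le_prod (fun i _ => hb i) (fun i _ => hba i)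
    have h1 := hb k
    have h2 := hba k
    have h3 := ha k
    nlinarith [ih]

lemma A_sub_B_le_cube (n k : ℕ) (hn : 1 ≤ n) (hk : k ≤ n) :
    A n k - B n k ≤ (k:ℝ)^3 / (n:ℝ)^2 := by
  have h := prod_sub_prod_le k (fun i => (n:ℝ) / ((n:ℝ) + (i:ℝ) + 1))
    (fun i => ((n - (i+1) : ℕ) : ℝ) / (n:ℝ))
    (fun i => by positivity)
    (fun i => by
      show ((n - (i+1) : ℕ) : ℝ) / (n:ℝ) ≤ (n:ℝ) / ((n:ℝ) + (i:ℝ) + 1)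
      rw [cast_fac]; exact bfac_le_afac n (i+1) hn)
    (fun i => by
      show (n:ℝ) / ((n:ℝ) + (i:ℝ) + 1) ≤ 1
      rw [cast_fac]; exact afac_le_one n (i+1))
  have hn' : (0:ℝ) < n := by exact_mod_cast hn
  calc A n k - B n k ≤ _ := h
    _ ≤ ∑ _i ∈ range k, (k:ℝ)^2/(n:ℝ)^2 := by
        apply sum_le_sum
        intro i hi
        rw [mem_range] at hi
        show (n:ℝ) / ((n:ℝ) + (i:ℝ) + 1) - ((n - (i+1) : ℕ) : ℝ) / (n:ℝ) ≤ (k:ℝ)^2/(n:ℝ)^2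
        rw [cast_fac]
        refine le_trans (afac_sub_bfac n (i+1) hn (by omega)) ?_
        gcongr
        exact_mod_cast hi
    _ = (k:ℝ) * ((k:ℝ)^2/(n:ℝ)^2) := by rw [sum_const, card_range, nsmul_eq_mul]
    _ = (k:ℝ)^3 / (n:ℝ)^2 := by ring

lemma sum_succ_ge (k : ℕ) : (k:ℝ)^2/2 ≤ ∑ i ∈ range k, ((i:ℝ)+1) := by
  induction k with
  | zero => simp
  | succ k ih =>
    rw [sum_range_succ]
    push_cast
    nlinarith [ih]

lemma A_le_exp (n k : ℕ) (hn : 1 ≤ n) (hk : k ≤ n) :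
    A n k ≤ Real.exp (-((k:ℝ)^2/(4*(n:ℝ)))) := by
  have hn' : (0:ℝ) < n := by exact_mod_cast hn
  calc A n k ≤ ∏ i ∈ range k, Real.exp (-(((i:ℝ)+1)/(2*(n:ℝ)))) := by
        apply prod_le_prod (fun i _ => by positivity)
        intro i hi
        rw [mem_range] at hi
        rw [cast_fac]
        have := afac_le_exp n (i+1) hn (by omega)
        convert this using 3
        all_goals push_cast
        all_goals rfl
    _ = Real.exp (∑ i ∈ range k, -(((i:ℝ)+1)/(2*(n:ℝ)))) := (Real.exp_sum _ _).symm
    _ ≤ Real.exp (-((k:ℝ)^2/(4*(n:ℝ)))) := by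
        apply Real.exp_le_exp.mpr
        have h1 := sum_succ_ge k
        have e : ∑ i ∈ range k, -(((i:ℝ)+1)/(2*(n:ℝ)))
            = -(∑ i ∈ range k, ((i:ℝ)+1))/(2*(n:ℝ)) := by
          rw [Finset.sum_neg_distrib, ← sum_div, neg_div]
        rw [e]
        rw [neg_div, neg_le_neg_iff, div_le_div_iff₀ (by positivity) (by positivity)]
        nlinarith [h1]

lemma A_tail_le (n m : ℕ) (hn : 1 ≤ n) :
    A n (n + m) ≤ Real.exp (-((n:ℝ)/4)) * (1/2)^m := by
  have hn' : (0:ℝ) < n := by exact_mod_cast hn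
  have h1 : A n (n + m) = A n n * ∏ i ∈ range m, (n:ℝ) / ((n:ℝ) + ((n + i : ℕ):ℝ) + 1) := by
    unfold A
    rw [prod_range_add]
  rw [h1]
  have h2 : A n n ≤ Real.exp (-((n:ℝ)/4)) := by
    have := A_le_exp n n hn le_rfl
    convert this using 3
    field_simp
  have h3 : ∏ i ∈ range m, (n:ℝ) / ((n:ℝ) + ((n + i : ℕ):ℝ) + 1) ≤ (1/2)^m := by
    calc ∏ i ∈ range m, (n:ℝ) / ((n:ℝ) + ((n + i : ℕ):ℝ) + 1) ≤ ∏ _i ∈ range m, (1/2 : ℝ) := by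
          apply prod_le_prod (fun i _ => by positivity)
          intro i _
          rw [div_le_div_iff₀ (by positivity) (by norm_num)]
          push_cast
          linarith [Nat.cast_nonneg (α := ℝ) i]
      _ = (1/2)^m := by rw [prod_const, card_range]
  calc A n n * ∏ i ∈ range m, (n:ℝ) / ((n:ℝ) + ((n + i : ℕ):ℝ) + 1)
      ≤ Real.exp (-((n:ℝ)/4)) * (1/2)^m :=
        mul_le_mul h2 h3 (prod_nonneg fun i _ => by positivity) (Real.exp_pos _).le

lemma c_pos (n : ℕ) (hn : 1 ≤ n) : 0 < c n n := by
  have hn' : (0:ℝ) < n := by exact_mod_cast hn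
  unfold c
  positivity

lemma summable_A (n : ℕ) (hn : 1 ≤ n) : Summable (A n) := by
  have h1 : Summable (fun k => c n (k + n)) := (summable_nat_add_iff n).mpr (summable_c n)
  have h2 : Summable (fun k => (c n n)⁻¹ * c n (k + n)) := h1.mul_left _
  apply h2.congr
  intro k
  rw [add_comm k n, c_shift n k, inv_mul_cancel_left₀ (ne_of_gt (c_pos n hn))]

lemma summable_A_tail (n : ℕ) (hn : 1 ≤ n) : Summable (fun m => A n (m + n)) :=
  (summable_nat_add_iff n).mpr (summable_A n hn)

lemma tail_A_le (n : ℕ) (hn : 1 ≤ n) :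
    ∑' m, A n (m + n) ≤ 2 * Real.exp (-((n:ℝ)/4)) := by
  have hgeom : Summable (fun m : ℕ => Real.exp (-((n:ℝ)/4)) * (1/2)^m) :=
    (summable_geometric_of_lt_one (by norm_num) (by norm_num)).mul_left _
  calc ∑' m, A n (m + n) ≤ ∑' m : ℕ, Real.exp (-((n:ℝ)/4)) * (1/2)^m := by
        apply Summable.tsum_le_tsum _ (summable_A_tail n hn) hgeom
        intro m
        rw [add_comm m n]
        exact A_tail_le n m hn
    _ = Real.exp (-((n:ℝ)/4)) * (1 - 1/2)⁻¹ := by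
        rw [tsum_mul_left, tsum_geometric_of_lt_one (by norm_num) (by norm_num)]
    _ = 2 * Real.exp (-((n:ℝ)/4)) := by norm_num; ring

lemma key_identity (n : ℕ) (hn : 1 ≤ n) :
    Real.exp n - 2 * ∑ j ∈ range n, c n j =
      c n n * ((∑ k ∈ range n, (A n k - B n k)) + ∑' m, A n (m + n)) := by
  have hc := summable_c n
  have hsum : ∑ j ∈ range n, c n j + ∑' k, c n (k + n) = ∑' j, c n j :=
    Summable.sum_add_tsum_nat_add n hc
  have htails : ∑' k, c n (k + n) = c n n * ∑' k, A n k := by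
    rw [← tsum_mul_left]
    congr 1
    funext k
    rw [add_comm k n, c_shift]
  have hAsplit : ∑ k ∈ range n, A n k + ∑' m, A n (m + n) = ∑' k, A n k :=
    Summable.sum_add_tsum_nat_add n (summable_A n hn)
  have hS : ∑ j ∈ range n, c n j = c n n * ∑ k ∈ range n, B n k := by
    rw [← sum_range_reflect (fun j => c n j) n]
    rw [mul_sum]
    apply sum_congr rfl
    intro k hk
    rw [mem_range] at hk
    exact c_reflect n k hk
  rw [tsum_c] at hsum
  rw [sum_sub_distrib]
  linear_combination -hsum + htails - (c n n) * hAsplit - hS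

lemma sum_AB_le (n : ℕ) (hn : 1 ≤ n) :
    ∑ k ∈ range n, (A n k - B n k) ≤
      (K n:ℝ)^4/(n:ℝ)^2 + (n:ℝ) * Real.exp (-(((K n):ℝ)^2/(4*(n:ℝ)))) := by
  set Kn := K n with hK
  set E0 := Real.exp (-(((Kn):ℝ)^2/(4*(n:ℝ)))) with hE0
  have hE0n : 0 ≤ E0 := (Real.exp_pos _).le
  have hpt : ∀ k ∈ range n, A n k - B n k ≤ (if k < Kn then (k:ℝ)^3/(n:ℝ)^2 else 0) + E0 := by
    intro k hk
    rw [mem_range] at hk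
    by_cases h : k < Kn
    · rw [if_pos h]
      have := A_sub_B_le_cube n k hn hk.le
      linarith
    · rw [if_neg h]
      push_neg at h
      have h1 : A n k - B n k ≤ A n k := by linarith [B_nonneg n k]
      have h2 := A_le_exp n k hn hk.le
      have h3 : Real.exp (-((k:ℝ)^2/(4*(n:ℝ)))) ≤ E0 := by
        apply Real.exp_le_exp.mpr
        have : ((Kn):ℝ) ≤ (k:ℝ) := by exact_mod_cast h
        have hKn0 : (0:ℝ) ≤ (Kn:ℝ) := Nat.cast_nonneg _
        have hn' : (0:ℝ) < n := by exact_mod_cast hn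
        rw [neg_le_neg_iff]
        gcongr
      linarith
  calc ∑ k ∈ range n, (A n k - B n k)
      ≤ ∑ k ∈ range n, ((if k < Kn then (k:ℝ)^3/(n:ℝ)^2 else 0) + E0) := sum_le_sum hpt
    _ = (∑ k ∈ range n, (if k < Kn then (k:ℝ)^3/(n:ℝ)^2 else 0)) + (n:ℝ) * E0 := by
        rw [sum_add_distrib, sum_const, card_range, nsmul_eq_mul]
    _ ≤ (Kn:ℝ) * ((Kn:ℝ)^3/(n:ℝ)^2) + (n:ℝ) * E0 := by
        have : ∑ k ∈ range n, (if k < Kn then (k:ℝ)^3/(n:ℝ)^2 else 0)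
            ≤ (Kn:ℝ) * ((Kn:ℝ)^3/(n:ℝ)^2) := by
          rw [← Finset.sum_filter]
          calc ∑ k ∈ (range n).filter (· < Kn), (k:ℝ)^3/(n:ℝ)^2
              ≤ ∑ _k ∈ (range n).filter (· < Kn), (Kn:ℝ)^3/(n:ℝ)^2 := by
                apply sum_le_sum
                intro k hk
                rw [mem_filter] at hk
                have : (k:ℝ) ≤ (Kn:ℝ) := by exact_mod_cast (hk.2).le
                gcongr
            _ = (((range n).filter (· < Kn)).card : ℝ) * ((Kn:ℝ)^3/(n:ℝ)^2) := by
                rw [sum_const, nsmul_eq_mul]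
            _ ≤ (Kn:ℝ) * ((Kn:ℝ)^3/(n:ℝ)^2) := by
                have hsub : (range n).filter (· < Kn) ⊆ range Kn := by
                  intro x hx
                  rw [mem_filter] at hx
                  rw [mem_range]
                  exact hx.2
                have := Finset.card_le_card hsub
                rw [card_range] at this
                have h1 : (((range n).filter (· < Kn)).card : ℝ) ≤ (Kn:ℝ) := by
                  exact_mod_cast this
                gcongr
        linarith
    _ = (Kn:ℝ)^4/(n:ℝ)^2 + (n:ℝ) * E0 := by ring

lemma sqrt_tendsto : Tendsto Real.sqrt atTop atTop := by
  rw [tendsto_atTop_atTop]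
  intro b
  refine ⟨(max b 0)^2, fun a ha => ?_⟩
  have h0 : 0 ≤ max b 0 := le_max_right _ _
  calc b ≤ max b 0 := le_max_left _ _
    _ = Real.sqrt ((max b 0)^2) := (Real.sqrt_sq h0).symm
    _ ≤ Real.sqrt a := Real.sqrt_le_sqrt ha

lemma stirling_bound : ∀ᶠ n : ℕ in atTop, c n n * Real.exp (-(n:ℝ)) ≤ 1/Real.sqrt n := by
  have hpi : (1:ℝ) < Real.sqrt π := by
    rw [show (1:ℝ) = Real.sqrt 1 by simp]
    apply Real.sqrt_lt_sqrt (by norm_num)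
    linarith [Real.pi_gt_three]
  have h1 : ∀ᶠ n : ℕ in atTop, 1 ≤ Stirling.stirlingSeq n :=
    Stirling.tendsto_stirlingSeq_sqrt_pi.eventually (eventually_ge_nhds hpi)
  filter_upwards [h1, eventually_ge_atTop 1] with n hs hn
  have hn' : (0:ℝ) < n := by exact_mod_cast hn
  have hfac : (0:ℝ) < (Nat.factorial n : ℝ) := by exact_mod_cast Nat.factorial_pos n
  have hexp : (0:ℝ) < Real.exp 1 := Real.exp_pos 1
  have he1 : c n n * Real.exp (-(n:ℝ)) = ((n:ℝ)/Real.exp 1)^n / (Nat.factorial n : ℝ) := by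
    unfold c
    rw [div_pow, Real.exp_neg, ← Real.exp_one_pow]
    field_simp
  have hs2 : Stirling.stirlingSeq n
      = (Nat.factorial n : ℝ) / (Real.sqrt (2*n) * ((n:ℝ)/Real.exp 1)^n) := rfl
  have hsq : (0:ℝ) < Real.sqrt (2*n) := Real.sqrt_pos.mpr (by positivity)
  have hpow : (0:ℝ) < ((n:ℝ)/Real.exp 1)^n := by positivity
  have he2 : c n n * Real.exp (-(n:ℝ)) = 1 / (Real.sqrt (2*n) * Stirling.stirlingSeq n) := by
    rw [he1, hs2]
    field_simp
  rw [he2]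
  apply div_le_div_of_nonneg_left (by norm_num) (Real.sqrt_pos.mpr hn')
  calc Real.sqrt n ≤ Real.sqrt (2*n) := Real.sqrt_le_sqrt (by linarith)
    _ = Real.sqrt (2*n) * 1 := (mul_one _).symm
    _ ≤ Real.sqrt (2*n) * Stirling.stirlingSeq n := by gcongr

lemma log_sq_le (n : ℕ) (hn : 1 ≤ n) :
    (Real.log n)^2 ≤ 64 * Real.sqrt (Real.sqrt n) := by
  have hn' : (1:ℝ) ≤ n := by exact_mod_cast hn
  have h8 : Real.log n = 8 * Real.log (Real.sqrt (Real.sqrt (Real.sqrt n))) := by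
    rw [Real.log_sqrt (Real.sqrt_nonneg _), Real.log_sqrt (Real.sqrt_nonneg _),
      Real.log_sqrt (by positivity)]
    ring
  have hpos : (0:ℝ) < Real.sqrt (Real.sqrt (Real.sqrt n)) := by
    apply Real.sqrt_pos.mpr
    apply Real.sqrt_pos.mpr
    apply Real.sqrt_pos.mpr
    linarith
  have hlog : Real.log (Real.sqrt (Real.sqrt (Real.sqrt n)))
      ≤ Real.sqrt (Real.sqrt (Real.sqrt n)) := by
    linarith [Real.log_le_sub_one_of_pos hpos]
  have hlog0 : 0 ≤ Real.log n := Real.log_nonneg hn'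
  have hsq : (Real.sqrt (Real.sqrt (Real.sqrt n)))^2 = Real.sqrt (Real.sqrt n) :=
    Real.sq_sqrt (Real.sqrt_nonneg _)
  have hlogn : Real.log n ≤ 8 * Real.sqrt (Real.sqrt (Real.sqrt n)) := by
    rw [h8]; linarith
  calc (Real.log n)^2 ≤ (8 * Real.sqrt (Real.sqrt (Real.sqrt n)))^2 :=
        sq_le_sq' (by linarith) hlogn
    _ = 64 * Real.sqrt (Real.sqrt n) := by rw [mul_pow, hsq]; norm_num

noncomputable def f (n : ℕ) : ℝ := Real.exp (-(n:ℝ)) * ∑ j ∈ range n, c n j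
noncomputable def E (n : ℕ) : ℝ := 1 - 2 * f n

lemma E_eq (n : ℕ) : E n = Real.exp (-(n:ℝ)) * (Real.exp n - 2 * ∑ j ∈ range n, c n j) := by
  unfold E f
  rw [mul_sub, ← Real.exp_add]
  simp
  ring

lemma E_nonneg : ∀ᶠ n : ℕ in atTop, 0 ≤ E n := by
  filter_upwards [eventually_ge_atTop 1] with n hn
  rw [E_eq, key_identity n hn]
  have h1 : 0 ≤ ∑ k ∈ range n, (A n k - B n k) :=
    sum_nonneg fun k _ => by linarith [B_le_A n k hn]
  have h2 : 0 ≤ ∑' m, A n (m + n) := tsum_nonneg fun m => A_nonneg n _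
  have h3 := (c_pos n hn).le
  positivity

set_option maxHeartbeats 1000000 in
lemma E_le : ∀ᶠ n : ℕ in atTop,
    E n ≤ 65536/Real.sqrt (Real.sqrt n) + 1/(n:ℝ) + 2*Real.exp (-((n:ℝ)/4)) := by
  filter_upwards [stirling_bound, eventually_ge_atTop 3] with n hst hn3
  have hn : 1 ≤ n := by omega
  have hn' : (0:ℝ) < n := by exact_mod_cast hn
  have hn3' : (3:ℝ) ≤ n := by exact_mod_cast hn3
  have hlog1 : (1:ℝ) ≤ Real.log n := by
    rw [Real.le_log_iff_exp_le hn']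
    linarith [Real.exp_one_lt_d9]
  set x := Real.sqrt (8*n*Real.log n) with hx
  have h8 : (0:ℝ) ≤ 8*n*Real.log n := by nlinarith
  have hx2 : x^2 = 8*n*Real.log n := Real.sq_sqrt h8
  have hx0 : 0 ≤ x := Real.sqrt_nonneg _
  have hx1 : (1:ℝ) ≤ x := by
    rw [hx, show (1:ℝ) = Real.sqrt 1 by simp]
    apply Real.sqrt_le_sqrt
    nlinarith
  have hKle : ((K n):ℝ) ≤ 2*x := by
    have h := Nat.ceil_lt_add_one hx0
    have h' : ((K n):ℝ) < x + 1 := h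
    linarith
  have hKge : x ≤ ((K n):ℝ) := Nat.le_ceil x
  have hK0 : (0:ℝ) ≤ ((K n):ℝ) := Nat.cast_nonneg _
  have hsumAB := sum_AB_le n hn
  have htail := tail_A_le n hn
  have h1 : 0 ≤ ∑ k ∈ range n, (A n k - B n k) :=
    sum_nonneg fun k _ => by linarith [B_le_A n k hn]
  have h2 : 0 ≤ ∑' m, A n (m + n) := tsum_nonneg fun m => A_nonneg n _
  have hsqn : (1:ℝ) ≤ Real.sqrt n := by
    rw [show (1:ℝ) = Real.sqrt 1 by simp]
    exact Real.sqrt_le_sqrt (by linarith)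
  have hsq0 : (0:ℝ) < Real.sqrt n := by linarith
  set E0 := Real.exp (-(((K n):ℝ)^2/(4*(n:ℝ)))) with hE0def
  have hE0n : 0 ≤ E0 := (Real.exp_pos _).le
  -- step 1 : E n ≤ (1/√n) * (K⁴/n² + n·E0 + 2 exp(-n/4))
  have hu0 : 0 ≤ c n n * Real.exp (-(n:ℝ)) := mul_nonneg (c_pos n hn).le (Real.exp_pos _).le
  have step1 : E n ≤ (1/Real.sqrt n) *
      (((K n):ℝ)^4/(n:ℝ)^2 + (n:ℝ)*E0 + 2*Real.exp (-((n:ℝ)/4))) := by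
    rw [E_eq, key_identity n hn]
    have hXY : (∑ k ∈ range n, (A n k - B n k)) + ∑' m, A n (m + n)
        ≤ ((K n):ℝ)^4/(n:ℝ)^2 + (n:ℝ)*E0 + 2*Real.exp (-((n:ℝ)/4)) := by
      have := add_le_add hsumAB htail
      linarith
    calc Real.exp (-(n:ℝ)) * (c n n * ((∑ k ∈ range n, (A n k - B n k)) + ∑' m, A n (m + n)))
        = (c n n * Real.exp (-(n:ℝ)))
          * ((∑ k ∈ range n, (A n k - B n k)) + ∑' m, A n (m + n)) := by ring
      _ ≤ (1/Real.sqrt n) *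
          (((K n):ℝ)^4/(n:ℝ)^2 + (n:ℝ)*E0 + 2*Real.exp (-((n:ℝ)/4))) :=
          mul_le_mul hst hXY (by linarith) (by positivity)
  -- term bounds
  have hK4 : ((K n):ℝ)^4 ≤ 1024*(n:ℝ)^2*(Real.log n)^2 := by
    have hp := pow_le_pow_left₀ hK0 hKle 4
    have h16 : (2*x)^4 = 16*(x^2)^2 := by ring
    rw [h16, hx2] at hp
    calc ((K n):ℝ)^4 ≤ 16*(8*(n:ℝ)*Real.log n)^2 := hp
      _ = 1024*(n:ℝ)^2*(Real.log n)^2 := by ring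
  have hssq : Real.sqrt (Real.sqrt n) * Real.sqrt (Real.sqrt n) = Real.sqrt n :=
    Real.mul_self_sqrt (Real.sqrt_nonneg _)
  have hsspos : (0:ℝ) < Real.sqrt (Real.sqrt n) := Real.sqrt_pos.mpr hsq0
  have hT1 : (1/Real.sqrt n) * (((K n):ℝ)^4/(n:ℝ)^2) ≤ 65536/Real.sqrt (Real.sqrt n) := by
    have ha : ((K n):ℝ)^4/(n:ℝ)^2 ≤ 1024*(Real.log n)^2 := by
      rw [div_le_iff₀ (by positivity)]
      nlinarith [hK4]
    have hb : (1024:ℝ)*(Real.log n)^2 ≤ 1024*64*Real.sqrt (Real.sqrt n) := by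
      have := log_sq_le n hn
      nlinarith
    calc (1/Real.sqrt n) * (((K n):ℝ)^4/(n:ℝ)^2)
        ≤ (1/Real.sqrt n) * (1024*64*Real.sqrt (Real.sqrt n)) := by
          apply mul_le_mul_of_nonneg_left (ha.trans hb) (by positivity)
      _ = 65536/Real.sqrt (Real.sqrt n) := by
          field_simp
          linear_combination (65536:ℝ) * hssq
  have hT2 : (1/Real.sqrt n) * ((n:ℝ)*E0) ≤ 1/(n:ℝ) := by
    have hK2 : 8*(n:ℝ)*Real.log n ≤ ((K n):ℝ)^2 := by
      have := pow_le_pow_left₀ hx0 hKge 2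
      rw [hx2] at this
      exact this
    have hE0le : E0 ≤ (n:ℝ)⁻¹*(n:ℝ)⁻¹ := by
      rw [hE0def]
      have harg : -(((K n):ℝ)^2/(4*(n:ℝ))) ≤ -(2*Real.log n) := by
        rw [neg_le_neg_iff]
        rw [le_div_iff₀ (by positivity)]
        linarith
      calc Real.exp (-(((K n):ℝ)^2/(4*(n:ℝ)))) ≤ Real.exp (-(2*Real.log n)) :=
            Real.exp_le_exp.mpr harg
        _ = (n:ℝ)⁻¹*(n:ℝ)⁻¹ := by
            rw [show -(2*Real.log (n:ℝ)) = (-Real.log (n:ℝ)) + (-Real.log (n:ℝ)) by ring,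
              Real.exp_add, Real.exp_neg, Real.exp_log hn']
    have hinv : (1:ℝ)/Real.sqrt n ≤ 1 := by
      rw [div_le_one hsq0]; exact hsqn
    have hprod : (n:ℝ)*E0 ≤ (n:ℝ)*((n:ℝ)⁻¹*(n:ℝ)⁻¹) :=
      mul_le_mul_of_nonneg_left hE0le hn'.le
    have hmain : (1/Real.sqrt n) * ((n:ℝ)*E0) ≤ 1 * ((n:ℝ)*((n:ℝ)⁻¹*(n:ℝ)⁻¹)) :=
      mul_le_mul hinv hprod (by positivity) (by norm_num)
    calc (1/Real.sqrt n) * ((n:ℝ)*E0) ≤ 1 * ((n:ℝ)*((n:ℝ)⁻¹*(n:ℝ)⁻¹)) := hmain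
      _ = 1/(n:ℝ) := by field_simp
  have hT3 : (1/Real.sqrt n) * (2*Real.exp (-((n:ℝ)/4))) ≤ 2*Real.exp (-((n:ℝ)/4)) := by
    have hinv : (1:ℝ)/Real.sqrt n ≤ 1 := by
      rw [div_le_one hsq0]; exact hsqn
    have h0 : (0:ℝ) ≤ 2*Real.exp (-((n:ℝ)/4)) := by positivity
    nlinarith
  calc E n ≤ (1/Real.sqrt n) *
      (((K n):ℝ)^4/(n:ℝ)^2 + (n:ℝ)*E0 + 2*Real.exp (-((n:ℝ)/4))) := step1
    _ = (1/Real.sqrt n) * (((K n):ℝ)^4/(n:ℝ)^2) + (1/Real.sqrt n) * ((n:ℝ)*E0)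
        + (1/Real.sqrt n) * (2*Real.exp (-((n:ℝ)/4))) := by ring
    _ ≤ 65536/Real.sqrt (Real.sqrt n) + 1/(n:ℝ) + 2*Real.exp (-((n:ℝ)/4)) :=
        add_le_add (add_le_add hT1 hT2) hT3

lemma E_tendsto : Tendsto E atTop (nhds 0) := by
  apply squeeze_zero' E_nonneg E_le
  have ht1 : Tendsto (fun n : ℕ => 65536/Real.sqrt (Real.sqrt n)) atTop (nhds 0) := by
    apply Tendsto.div_atTop (tendsto_const_nhds)
    exact (sqrt_tendsto.comp sqrt_tendsto).comp tendsto_natCast_atTop_atTop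
  have ht2 : Tendsto (fun n : ℕ => 1/(n:ℝ)) atTop (nhds 0) :=
    tendsto_one_div_atTop_nhds_zero_nat
  have ht3 : Tendsto (fun n : ℕ => 2*Real.exp (-((n:ℝ)/4))) atTop (nhds 0) := by
    have hdiv : Tendsto (fun n : ℕ => (n:ℝ)/4) atTop atTop :=
      tendsto_natCast_atTop_atTop.atTop_div_const (by norm_num)
    have := Real.tendsto_exp_neg_atTop_nhds_zero.comp hdiv
    have h2 := this.const_mul (2:ℝ)
    simpa using h2
  have := (ht1.add ht2).add ht3
  simpa using this

lemma part1 : Tendsto f atTop (nhds (1/2 : ℝ)) := by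
  have h := (Tendsto.sub
    (tendsto_const_nhds : Tendsto (fun _ : ℕ => (1:ℝ)) atTop (nhds 1)) E_tendsto).div_const 2
  have heq : (fun n => ((1:ℝ) - E n)/2) = f := by
    funext n
    unfold E
    ring
  rw [heq] at h
  convert h using 2
  norm_num

end GinAux

/-- `lim_{n→∞} e^{−n}·∑_{j<n} n^j/j! = 1/2`; equivalently, for `|z| = 1` the diagonal of
the Ginibre kernel satisfies `K_n(z,z) = (n/2)·(1 + o(1))` as `n → ∞`. -/
theorem exp_partial_sum_diagonal_limit :
    Tendsto (fun n : ℕ =>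
        Real.exp (-(n : ℝ)) * ∑ j ∈ Finset.range n, (n : ℝ) ^ j / (Nat.factorial j : ℝ))
      atTop (nhds (1 / 2)) ∧
    ∀ z : ℂ, ‖z‖ = 1 →
      Tendsto (fun n : ℕ => ginibreK n z z / ((n : ℂ) / 2)) atTop (nhds 1) := by
  have hpart1 : Tendsto (fun n : ℕ =>
      Real.exp (-(n : ℝ)) * ∑ j ∈ Finset.range n, (n : ℝ) ^ j / (Nat.factorial j : ℝ))
      atTop (nhds (1 / 2)) := GinAux.part1
  refine ⟨hpart1, ?_⟩
  intro z hz
  have hzz : z * (starRingEnd ℂ) z = 1 := by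
    rw [Complex.mul_conj]
    norm_cast
    rw [Complex.normSq_eq_norm_sq, hz]
    norm_num
  have habs : (‖z‖ ^ 2 : ℝ) = 1 := by rw [hz]; norm_num
  have key : ∀ᶠ n : ℕ in atTop,
      ((2 * (Real.exp (-(n : ℝ))
          * ∑ j ∈ Finset.range n, (n : ℝ) ^ j / (Nat.factorial j : ℝ)) : ℝ) : ℂ)
        = ginibreK n z z / ((n : ℂ) / 2) := by
    filter_upwards [eventually_ge_atTop 1] with n hn
    have hn0 : ((n:ℂ)) ≠ 0 := Nat.cast_ne_zero.mpr (by omega)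
    unfold ginibreK
    rw [habs]
    have h1 : ((n:ℂ) * z * (starRingEnd ℂ) z) = (n:ℂ) := by rw [mul_assoc, hzz, mul_one]
    rw [h1]
    have h2 : (-((n : ℂ) * ((1:ℝ) : ℂ) / 2) - (n : ℂ) * ((1:ℝ) : ℂ) / 2) = -(n:ℂ) := by
      push_cast; ring
    rw [h2]
    have h3 : ((Real.exp (-(n:ℝ)) : ℝ) : ℂ) = Complex.exp (-(n:ℂ)) := by
      rw [show -(n:ℂ) = ((-(n:ℝ) : ℝ) : ℂ) by push_cast; ring, ← Complex.ofReal_exp]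
    have h4 : ((∑ j ∈ Finset.range n, (n : ℝ) ^ j / (Nat.factorial j : ℝ) : ℝ) : ℂ)
        = ∑ j ∈ Finset.range n, (n : ℂ) ^ j / (Nat.factorial j : ℂ) := by
      push_cast; rfl
    rw [← h3, ← h4]
    push_cast
    field_simp
  have hlim : Tendsto (fun n : ℕ =>
      ((2 * (Real.exp (-(n : ℝ))
          * ∑ j ∈ Finset.range n, (n : ℝ) ^ j / (Nat.factorial j : ℝ)) : ℝ) : ℂ))
      atTop (nhds 1) := by
    have h2 : Tendsto (fun n : ℕ =>
        2 * (Real.exp (-(n : ℝ)) * ∑ j ∈ Finset.range n, (n : ℝ) ^ j / (Nat.factorial j : ℝ)))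
        atTop (nhds 1) := by
      have h := hpart1.const_mul (2:ℝ)
      norm_num at h
      exact h
    have h5 := (Complex.continuous_ofReal.tendsto 1).comp h2
    rw [Complex.ofReal_one] at h5
    exact h5
  exact Tendsto.congr' key hlim
end

section
/- Let z, w ∈ ℂ with |z| = |w| = 1 and z ≠ w. Then lim_{n→∞} √(2π/n) · (conj(z)·w)^n · K_n(z,w) = 1/(z·conj(w) − 1). In other words, up to the unimodular cocycle c_n(z,w) = (z·conj(w))^n, the Ginibre kernel satisfies K_n(z,w) ∼ √(2πn)·S(z,w)·c_n(z,w) with Szegő kernel S(z,w) = (1/(2π))·1/(z·conj(w) − 1). -/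
open Complex Filter Topology


noncomputable def aSeq (n k : ℕ) : ℝ := ∏ i ∈ Finset.range k, (1 - (i : ℝ) / n)
noncomputable def dSeq (n j : ℕ) : ℝ := ((j : ℝ) / n) * aSeq n j

lemma aSeq_succ (n k : ℕ) : aSeq n (k + 1) = aSeq n k * (1 - (k : ℝ) / n) :=
  Finset.prod_range_succ _ _
lemma aSeq_one (n : ℕ) : aSeq n 1 = 1 := by simp [aSeq]
lemma aSeq_top {n : ℕ} (hn : 1 ≤ n) : aSeq n (n + 1) = 0 := by
  apply Finset.prod_eq_zero (Finset.self_mem_range_succ n)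
  have : (0:ℝ) < n := by exact_mod_cast hn
  field_simp
  norm_num
lemma dSeq_one {n : ℕ} : dSeq n 1 = 1 / n := by simp [dSeq, aSeq_one]
lemma dSeq_top {n : ℕ} (hn : 1 ≤ n) : dSeq n (n + 1) = 0 := by
  simp [dSeq, aSeq_top hn]

lemma aSeq_fact {n k i : ℕ} (h : k ≤ n) (hi : i < k) :
    0 ≤ 1 - (i:ℝ)/n ∧ 1 - (i:ℝ)/n ≤ 1 := by
  have hn : 0 < n := lt_of_le_of_lt (Nat.zero_le i) (lt_of_lt_of_le hi h)
  have h1 : (i : ℝ) / n ≤ 1 := by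
    rw [div_le_one (by positivity)]
    exact_mod_cast le_of_lt (lt_of_lt_of_le hi h)
  have h2 : 0 ≤ (i : ℝ) / n := by positivity
  constructor <;> linarith

lemma aSeq_nonneg {n k : ℕ} (h : k ≤ n) : 0 ≤ aSeq n k :=
  Finset.prod_nonneg fun i hi => (aSeq_fact h (Finset.mem_range.mp hi)).1

lemma aSeq_le_one {n k : ℕ} (h : k ≤ n) : aSeq n k ≤ 1 :=
  Finset.prod_le_one (fun i hi => (aSeq_fact h (Finset.mem_range.mp hi)).1)
    (fun i hi => (aSeq_fact h (Finset.mem_range.mp hi)).2)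

lemma dSeq_diff {n k : ℕ} (hn : 1 ≤ n) :
    dSeq n (k+2) - dSeq n (k+1)
      = (aSeq n (k+1) / n) * (1 - ((k:ℝ)+1) * ((k:ℝ)+2) / n) := by
  have hn' : (0:ℝ) < n := by exact_mod_cast hn
  unfold dSeq
  rw [show k + 2 = (k+1) + 1 from rfl, aSeq_succ n (k+1)]
  push_cast
  field_simp
  ring

lemma max_diff_bound {n k : ℕ} (hn : 1 ≤ n) (hk : k < n) :
    max (dSeq n (k+2) - dSeq n (k+1)) 0 ≤ if k < Nat.sqrt n then 1/(n:ℝ) else 0 := by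
  have hn' : (0:ℝ) < n := by exact_mod_cast hn
  have ha0 : 0 ≤ aSeq n (k+1) := aSeq_nonneg hk
  have ha1 : aSeq n (k+1) ≤ 1 := aSeq_le_one hk
  by_cases hc : (k+1) * (k+2) < n
  · have hsq : k < Nat.sqrt n := by
      have h1 : (k+1) * (k+1) ≤ n := le_trans (Nat.mul_le_mul_left _ (by omega)) (le_of_lt hc)
      have := Nat.le_sqrt.mpr h1
      omega
    rw [if_pos hsq]
    have hA0 : 0 ≤ aSeq n (k+1) / n := div_nonneg ha0 hn'.le
    have hA1 : aSeq n (k+1) / n ≤ 1 / n := by gcongr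
    have hB : 0 ≤ ((k:ℝ)+1) * ((k:ℝ)+2) / n := by positivity
    have hd : dSeq n (k+2) - dSeq n (k+1) ≤ 1/(n:ℝ) := by
      rw [dSeq_diff hn]
      nlinarith [mul_nonneg hA0 hB]
    exact max_le hd (by positivity)
  · push_neg at hc
    have hcast : (n:ℝ) ≤ ((k:ℝ)+1) * ((k:ℝ)+2) := by exact_mod_cast hc
    have h1 : (1:ℝ) ≤ ((k:ℝ)+1) * ((k:ℝ)+2) / n := (one_le_div hn').mpr hcast
    have hd : dSeq n (k+2) - dSeq n (k+1) ≤ 0 := by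
      rw [dSeq_diff hn]
      exact mul_nonpos_of_nonneg_of_nonpos (div_nonneg ha0 hn'.le) (by linarith)
    rw [max_eq_right hd]
    split <;> positivity

lemma sum_abs_diff_bound {n : ℕ} (hn : 1 ≤ n) :
    ∑ k ∈ Finset.range n, |dSeq n (k+2) - dSeq n (k+1)|
      ≤ 2 * (Nat.sqrt n : ℝ)/n + 1/n := by
  have hn' : (0:ℝ) < n := by exact_mod_cast hn
  have habs : ∀ x : ℝ, |x| = 2 * max x 0 - x := by
    intro x
    rcases le_or_gt 0 x with h | h
    · rw [_root_.abs_of_nonneg h, max_eq_left h]; ring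
    · rw [abs_of_neg h, max_eq_right h.le]; ring
  have hsum : ∑ k ∈ Finset.range n, (dSeq n (k+2) - dSeq n (k+1)) = dSeq n (n+1) - dSeq n 1 := by
    simpa using Finset.sum_range_sub (fun k => dSeq n (k+1)) n
  have hmaxsum : ∑ k ∈ Finset.range n, max (dSeq n (k+2) - dSeq n (k+1)) 0
      ≤ (Nat.sqrt n : ℝ)/n := by
    calc ∑ k ∈ Finset.range n, max (dSeq n (k+2) - dSeq n (k+1)) 0
        ≤ ∑ k ∈ Finset.range n, (if k < Nat.sqrt n then 1/(n:ℝ) else 0) := by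
          apply Finset.sum_le_sum
          intro k hk
          exact max_diff_bound hn (Finset.mem_range.mp hk)
      _ = ∑ k ∈ (Finset.range n).filter (fun k => k < Nat.sqrt n), (1/(n:ℝ)) := by
          rw [Finset.sum_filter]
      _ = ((Finset.range n).filter (fun k => k < Nat.sqrt n)).card * (1/(n:ℝ)) := by
          rw [Finset.sum_const, nsmul_eq_mul]
      _ ≤ (Nat.sqrt n : ℝ) * (1/(n:ℝ)) := by
          apply mul_le_mul_of_nonneg_right _ (by positivity)
          have hsub : (Finset.range n).filter (fun k => k < Nat.sqrt n)
              ⊆ Finset.range (Nat.sqrt n) := by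
            intro k hk
            simp only [Finset.mem_filter, Finset.mem_range] at hk ⊢
            exact hk.2
          have := Finset.card_le_card hsub
          rw [Finset.card_range] at this
          exact_mod_cast this
      _ = (Nat.sqrt n : ℝ)/n := by ring
  calc ∑ k ∈ Finset.range n, |dSeq n (k+2) - dSeq n (k+1)|
      = 2 * (∑ k ∈ Finset.range n, max (dSeq n (k+2) - dSeq n (k+1)) 0)
        - ∑ k ∈ Finset.range n, (dSeq n (k+2) - dSeq n (k+1)) := by
        rw [Finset.mul_sum, ← Finset.sum_sub_distrib]
        exact Finset.sum_congr rfl fun k _ => habs _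
    _ = 2 * (∑ k ∈ Finset.range n, max (dSeq n (k+2) - dSeq n (k+1)) 0) + 1/n := by
        rw [hsum, dSeq_top hn, dSeq_one]
        ring
    _ ≤ 2 * ((Nat.sqrt n : ℝ)/n) + 1/n := by linarith
    _ = 2 * (Nat.sqrt n : ℝ)/n + 1/n := by ring

lemma tendsto_sqrtn_div : Tendsto (fun n : ℕ => (Nat.sqrt n : ℝ)/n) atTop (𝓝 0) := by
  have hs : Tendsto Real.sqrt atTop atTop := by
    rw [show Real.sqrt = fun x : ℝ => x ^ (1/2 : ℝ) from funext fun x => Real.sqrt_eq_rpow x]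
    exact tendsto_rpow_atTop (by norm_num)
  have htends : Tendsto (fun n : ℕ => (Real.sqrt n)⁻¹) atTop (𝓝 0) :=
    (hs.comp tendsto_natCast_atTop_atTop).inv_tendsto_atTop
  apply squeeze_zero (fun n => by positivity) _ htends
  intro n
  rcases Nat.eq_zero_or_pos n with h | h
  · simp [h]
  · have hn' : (0:ℝ) < n := by exact_mod_cast h
    calc (Nat.sqrt n : ℝ)/n ≤ Real.sqrt n / n := by
          gcongr
          exact Real.nat_sqrt_le_real_sqrt
      _ = (Real.sqrt n)⁻¹ := by
          have hs0 : Real.sqrt n ≠ 0 := (Real.sqrt_pos.mpr hn').ne'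
          field_simp
          exact Real.sq_sqrt hn'.le
lemma abel_G {n : ℕ} (hn : 1 ≤ n) (v : ℂ) :
    (1 - v) * ∑ k ∈ Finset.range n, v ^ (k+1) * ((aSeq n (k+1) : ℝ) : ℂ)
      = v - ∑ k ∈ Finset.range n, v ^ (k+2) * ((dSeq n (k+1) : ℝ) : ℂ) := by
  have key : ∀ k, (1 - v) * (v ^ (k+1) * ((aSeq n (k+1) : ℝ) : ℂ))
      = (v ^ (k+1) * ((aSeq n (k+1):ℝ):ℂ) - v ^ ((k+1)+1) * ((aSeq n ((k+1)+1):ℝ):ℂ))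
        - v ^ (k+2) * ((dSeq n (k+1):ℝ):ℂ) := by
    intro k
    have h : (aSeq n (k+1+1) : ℝ) = aSeq n (k+1) - dSeq n (k+1) := by
      rw [aSeq_succ n (k+1), dSeq]; ring
    rw [h]; push_cast; ring
  rw [Finset.mul_sum, Finset.sum_congr rfl (fun k _ => key k), Finset.sum_sub_distrib,
    Finset.sum_range_sub' (fun k => v ^ (k+1) * ((aSeq n (k+1):ℝ):ℂ))]
  rw [aSeq_one, aSeq_top hn]
  push_cast; ring

lemma abel_R {n : ℕ} (hn : 1 ≤ n) (v : ℂ) :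
    (1 - v) * ∑ k ∈ Finset.range n, v ^ (k+2) * ((dSeq n (k+1) : ℝ) : ℂ)
      = v ^ 2 * ((dSeq n 1 : ℝ) : ℂ)
        + ∑ k ∈ Finset.range n, v ^ (k+3) * (((dSeq n (k+2) - dSeq n (k+1) : ℝ)) : ℂ) := by
  have key : ∀ k, (1 - v) * (v ^ (k+2) * ((dSeq n (k+1) : ℝ) : ℂ))
      = (v ^ (k+2) * ((dSeq n (k+1):ℝ):ℂ) - v ^ ((k+1)+2) * ((dSeq n ((k+1)+1):ℝ):ℂ))
        + v ^ (k+3) * (((dSeq n (k+2) - dSeq n (k+1) : ℝ)):ℂ) := by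
    intro k
    push_cast; ring
  rw [Finset.mul_sum, Finset.sum_congr rfl (fun k _ => key k), Finset.sum_add_distrib,
    Finset.sum_range_sub' (fun k => v ^ (k+2) * ((dSeq n (k+1):ℝ):ℂ))]
  rw [dSeq_top hn]
  push_cast; ring

lemma tendsto_G {v : ℂ} (hv : ‖v‖ = 1) (hv1 : v ≠ 1) :
    Tendsto (fun n => ∑ k ∈ Finset.range n, v ^ (k+1) * ((aSeq n (k+1) : ℝ) : ℂ)) atTop
      (𝓝 (v / (1 - v))) := by
  have h1v : (1:ℂ) - v ≠ 0 := sub_ne_zero.mpr (Ne.symm hv1)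
  set R : ℕ → ℂ := fun n => ∑ k ∈ Finset.range n, v ^ (k+2) * ((dSeq n (k+1) : ℝ) : ℂ) with hRdef
  have hnormv : ∀ m : ℕ, ‖v ^ m‖ = 1 := by
    intro m
    rw [norm_pow, hv, one_pow]
  have hbound : ∀ n : ℕ, 1 ≤ n →
      ‖(1 - v) * R n‖ ≤ 1/(n:ℝ) + (2 * (Nat.sqrt n : ℝ)/n + 1/n) := by
    intro n hn
    have hn' : (0:ℝ) < n := by exact_mod_cast hn
    rw [hRdef, abel_R hn v]
    apply le_trans (norm_add_le _ _)
    apply add_le_add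
    · rw [norm_mul, hnormv 2, one_mul, Complex.norm_real, Real.norm_eq_abs, dSeq_one]
      exact le_of_eq (_root_.abs_of_nonneg (by positivity))
    · apply le_trans (norm_sum_le _ _)
      apply le_trans _ (sum_abs_diff_bound hn)
      apply le_of_eq
      apply Finset.sum_congr rfl
      intro k _
      rw [norm_mul, hnormv (k+3), one_mul, Complex.norm_real, Real.norm_eq_abs]
  have hB : Tendsto (fun n : ℕ => 1/(n:ℝ) + (2 * (Nat.sqrt n : ℝ)/n + 1/n)) atTop (𝓝 0) := by
    have h1 : Tendsto (fun n : ℕ => 1/(n:ℝ)) atTop (𝓝 0) :=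
      tendsto_one_div_atTop_nhds_zero_nat
    have h2 : Tendsto (fun n : ℕ => 2 * (Nat.sqrt n : ℝ)/n) atTop (𝓝 0) := by
      have := tendsto_sqrtn_div.const_mul (2:ℝ)
      simpa [mul_div_assoc] using this
    simpa using h1.add (h2.add h1)
  have h0 : Tendsto (fun n => (1 - v) * R n) atTop (𝓝 0) := by
    apply squeeze_zero_norm' _ hB
    exact Filter.eventually_atTop.mpr ⟨1, hbound⟩
  have hR : Tendsto R atTop (𝓝 0) := by
    have h := h0.const_mul (1 - v)⁻¹
    rw [mul_zero] at h
    apply h.congr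
    intro n
    rw [← mul_assoc, inv_mul_cancel₀ h1v, one_mul]
  have hmain : Tendsto (fun n => (v - R n)/(1 - v)) atTop (𝓝 (v / (1 - v))) := by
    have := (tendsto_const_nhds (x := v)).sub hR
    rw [sub_zero] at this
    exact this.div_const _
  apply hmain.congr'
  filter_upwards [Filter.eventually_ge_atTop 1] with n hn
  rw [← abel_G hn v]
  exact mul_div_cancel_left₀ _ h1v

lemma aSeq_eq_descFactorial {n : ℕ} (hn : 1 ≤ n) : ∀ m : ℕ, m ≤ n →
    aSeq n m = (n.descFactorial m : ℝ) / (n : ℝ) ^ m := by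
  intro m
  induction m with
  | zero => intro _; simp [aSeq]
  | succ k ih =>
    intro hk
    have hkn : k ≤ n := Nat.le_of_succ_le hk
    have hnpos : (0 : ℝ) < n := by exact_mod_cast hn
    rw [aSeq_succ, ih hkn, Nat.descFactorial_succ]
    push_cast [Nat.cast_sub hkn]
    field_simp
    ring

lemma sum_reindex {n : ℕ} (hn : 1 ≤ n) {u : ℂ} (hu0 : u ≠ 0) :
    ∑ j ∈ Finset.range n, ((n:ℂ) * u) ^ j / (j.factorial : ℂ)
      = ((n:ℂ) * u) ^ n / (n.factorial : ℂ)
        * ∑ k ∈ Finset.range n, (u⁻¹) ^ (k+1) * ((aSeq n (k+1) : ℝ) : ℂ) := by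
  have hn0 : (n:ℂ) ≠ 0 := Nat.cast_ne_zero.mpr (by omega)
  rw [Finset.mul_sum, ← Finset.sum_range_reflect (fun j => ((n:ℂ) * u) ^ j / (j.factorial : ℂ)) n]
  apply Finset.sum_congr rfl
  intro k hk
  rw [Finset.mem_range] at hk
  have hm : k + 1 ≤ n := hk
  have hidx : n - 1 - k = n - (k+1) := by omega
  have hfac : ((n - (k+1)).factorial : ℂ) * ((n.descFactorial (k+1)) : ℂ)
      = (n.factorial : ℂ) := by
    exact_mod_cast congrArg (Nat.cast : ℕ → ℂ) (Nat.factorial_mul_descFactorial hm)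
  have hpow : ((n:ℂ) * u) ^ n = ((n:ℂ) * u) ^ (n - (k+1)) * ((n:ℂ) * u) ^ (k+1) := by
    rw [← pow_add, Nat.sub_add_cancel hm]
  have haseq : ((aSeq n (k+1) : ℝ) : ℂ) = ((n.descFactorial (k+1)) : ℂ) / ((n:ℂ)) ^ (k+1) := by
    rw [aSeq_eq_descFactorial hn (k+1) hm]
    push_cast
    rfl
  have hdesc0 : ((n.descFactorial (k+1)) : ℂ) ≠ 0 :=
    Nat.cast_ne_zero.mpr (by rw [Ne, Nat.descFactorial_eq_zero_iff_lt]; omega)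
  have hf1 : ((n - (k+1)).factorial : ℂ) ≠ 0 := Nat.cast_ne_zero.mpr (Nat.factorial_ne_zero _)
  have hf2 : ((n.factorial : ℕ) : ℂ) ≠ 0 := Nat.cast_ne_zero.mpr (Nat.factorial_ne_zero _)
  rw [hidx, haseq, hpow]
  field_simp
  rw [← hfac, Nat.descFactorial_succ, Nat.cast_mul]
  ring
  rw [inv_pow]
  field_simp

lemma stirling_factor_eq {n : ℕ} (hn : 1 ≤ n) :
    Real.sqrt (2 * Real.pi / n) * (n:ℝ) ^ (n+1) * Real.exp (-(n:ℝ)) / (n.factorial : ℝ)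
      = Real.sqrt Real.pi * (Stirling.stirlingSeq n)⁻¹ := by
  have hn' : (0:ℝ) < n := by exact_mod_cast hn
  have hfac : (0:ℝ) < (n.factorial : ℝ) := by exact_mod_cast (Nat.factorial_pos n)
  have hexp : (0:ℝ) < Real.exp 1 := Real.exp_pos 1
  have hsn : (0:ℝ) < Real.sqrt n := Real.sqrt_pos.mpr hn'
  rw [Stirling.stirlingSeq]
  have hexpn : Real.exp (-(n:ℝ)) = (Real.exp 1 ^ n)⁻¹ := by
    rw [Real.exp_neg, ← Real.exp_nat_mul, mul_one]
  rw [hexpn]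
  rw [Real.sqrt_div (by positivity) (n:ℝ), Real.sqrt_mul (by norm_num : (0:ℝ) ≤ 2)]
  rw [Real.sqrt_mul (by norm_num : (0:ℝ) ≤ 2) (n:ℝ)]
  rw [div_pow, pow_succ]
  have h2 : (0:ℝ) < Real.sqrt 2 := by positivity
  have hsq : Real.sqrt (n:ℝ) * Real.sqrt (n:ℝ) = (n:ℝ) := Real.mul_self_sqrt hn'.le
  field_simp
  ring_nf
  rw [Real.sq_sqrt hn'.le]

/-- Off-diagonal boundary asymptotics for the Ginibre kernel: for `|z| = |w| = 1` with
`z ≠ w`, one has `√(2π/n)·(z̄w)ⁿ·K_n(z,w) → 1/(z w̄ − 1)`; i.e. up to the cocycle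
`(z w̄)ⁿ` the kernel behaves like `√(2πn)` times the Szegő kernel
`S(z,w) = (1/(2π))·1/(z w̄ − 1)`. -/
theorem ginibre_boundary_szego_kernel (z w : ℂ)
    (hz : ‖z‖ = 1) (hw : ‖w‖ = 1) (hzw : z ≠ w) :
    Tendsto (fun n : ℕ =>
        ((Real.sqrt (2 * Real.pi / n) : ℝ) : ℂ) * ((starRingEnd ℂ) z * w) ^ n * ginibreK n z w)
      atTop (nhds (1 / (z * (starRingEnd ℂ) w - 1))) := by
  set u : ℂ := z * (starRingEnd ℂ) w with hu
  have hz1 : z * (starRingEnd ℂ) z = 1 := by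
    rw [Complex.mul_conj, Complex.normSq_eq_norm_sq, hz]; norm_num
  have hw1 : w * (starRingEnd ℂ) w = 1 := by
    rw [Complex.mul_conj, Complex.normSq_eq_norm_sq, hw]; norm_num
  have huabs : ‖u‖ = 1 := by
    rw [hu, norm_mul, Complex.norm_conj, hz, hw]; norm_num
  have hu0 : u ≠ 0 := by
    intro h; rw [h] at huabs; simp at huabs
  have hw0 : (starRingEnd ℂ) w ≠ 0 := by
    intro h
    have : ‖(starRingEnd ℂ) w‖ = 1 := by rw [Complex.norm_conj, hw]
    rw [h] at this; simp at this
  have hu1 : u ≠ 1 := by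
    intro h
    apply hzw
    have hzero : (z - w) * (starRingEnd ℂ) w = 0 := by
      rw [sub_mul, ← hu, h, hw1, sub_self]
    rcases mul_eq_zero.mp hzero with h' | h'
    · exact sub_eq_zero.mp h'
    · exact absurd h' hw0
  have hv : (starRingEnd ℂ) z * w = u⁻¹ := by
    have hmul : u * ((starRingEnd ℂ) z * w) = 1 := by
      rw [hu, show z * (starRingEnd ℂ) w * ((starRingEnd ℂ) z * w)
          = (z * (starRingEnd ℂ) z) * (w * (starRingEnd ℂ) w) from by ring, hz1, hw1, mul_one]
    have := congrArg (fun t => u⁻¹ * t) hmul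
    simpa [← mul_assoc, inv_mul_cancel₀ hu0] using this
  have hvabs : ‖u⁻¹‖ = 1 := by rw [norm_inv, huabs]; norm_num
  have hv1 : u⁻¹ ≠ 1 := fun h => hu1 (by rw [← inv_inv u, h, inv_one])
  -- the eventual identity
  have heq : ∀ n : ℕ, 1 ≤ n →
      ((Real.sqrt (2 * Real.pi / n) : ℝ) : ℂ) * ((starRingEnd ℂ) z * w) ^ n * ginibreK n z w
        = ((Real.sqrt (2 * Real.pi / n) * (n:ℝ) ^ (n+1) * Real.exp (-(n:ℝ))
              / (n.factorial : ℝ) : ℝ) : ℂ)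
          * ∑ k ∈ Finset.range n, (u⁻¹) ^ (k+1) * ((aSeq n (k+1) : ℝ) : ℂ) := by
    intro n hn
    have hn0 : (n:ℂ) ≠ 0 := Nat.cast_ne_zero.mpr (by omega)
    have hf2 : ((n.factorial : ℕ) : ℂ) ≠ 0 := Nat.cast_ne_zero.mpr (Nat.factorial_ne_zero _)
    have harg : -((n:ℂ) * ((‖z‖ ^ 2 : ℝ) : ℂ) / 2)
        - (n:ℂ) * ((‖w‖ ^ 2 : ℝ) : ℂ) / 2 = -(n:ℂ) := by
      rw [hz, hw]; push_cast; ring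
    have hK : ginibreK n z w
        = (n:ℂ) * (((n:ℂ) * u) ^ n / (n.factorial : ℂ)
            * ∑ k ∈ Finset.range n, (u⁻¹) ^ (k+1) * ((aSeq n (k+1) : ℝ) : ℂ))
          * Complex.exp (-(n:ℂ)) := by
      rw [ginibreK, harg,
        show (n:ℂ) * z * (starRingEnd ℂ) w = (n:ℂ) * u from by rw [hu]; ring,
        sum_reindex hn hu0]
    rw [hK, hv]
    have hpow : (u⁻¹) ^ n * ((n:ℂ) * u) ^ n = (n:ℂ) ^ n := by
      calc (u⁻¹) ^ n * ((n:ℂ) * u) ^ n = ((u⁻¹ * u) ^ n) * (n:ℂ) ^ n := by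
            rw [mul_pow, mul_pow]; ring
        _ = (n:ℂ) ^ n := by rw [inv_mul_cancel₀ hu0, one_pow, one_mul]
    have hexp : Complex.exp (-(n:ℂ)) = ((Real.exp (-(n:ℝ)) : ℝ) : ℂ) := by
      rw [Complex.ofReal_exp]; norm_num
    have hcast : ((Real.sqrt (2 * Real.pi / n) * (n:ℝ) ^ (n+1) * Real.exp (-(n:ℝ))
          / (n.factorial : ℝ) : ℝ) : ℂ)
        = ((Real.sqrt (2 * Real.pi / n) : ℝ) : ℂ) * (n:ℂ) ^ (n+1) * Complex.exp (-(n:ℂ))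
          / ((n.factorial : ℕ) : ℂ) := by
      rw [Complex.ofReal_div, Complex.ofReal_mul, Complex.ofReal_mul, Complex.ofReal_exp]
      push_cast
      ring
    rw [hcast]
    set G := ∑ k ∈ Finset.range n, (u⁻¹) ^ (k+1) * ((aSeq n (k+1) : ℝ) : ℂ) with hG
    calc ((Real.sqrt (2 * Real.pi / n) : ℝ) : ℂ) * (u⁻¹) ^ n
          * ((n:ℂ) * (((n:ℂ) * u) ^ n / (n.factorial : ℂ) * G) * Complex.exp (-(n:ℂ)))
        = ((Real.sqrt (2 * Real.pi / n) : ℝ) : ℂ) * ((u⁻¹) ^ n * ((n:ℂ) * u) ^ n)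
          * (n:ℂ) * G * Complex.exp (-(n:ℂ)) / (n.factorial : ℂ) := by ring
      _ = ((Real.sqrt (2 * Real.pi / n) : ℝ) : ℂ) * (n:ℂ) ^ n
          * (n:ℂ) * G * Complex.exp (-(n:ℂ)) / (n.factorial : ℂ) := by rw [hpow]
      _ = ((Real.sqrt (2 * Real.pi / n) : ℝ) : ℂ) * (n:ℂ) ^ (n+1) * Complex.exp (-(n:ℂ))
          / ((n.factorial : ℕ) : ℂ) * G := by rw [pow_succ]; ring
  -- the scalar factor tends to 1
  have hc : Tendsto (fun n : ℕ => Real.sqrt (2 * Real.pi / n) * (n:ℝ) ^ (n+1)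
      * Real.exp (-(n:ℝ)) / (n.factorial : ℝ)) atTop (𝓝 1) := by
    have h := Stirling.tendsto_stirlingSeq_sqrt_pi
    have hpi : Real.sqrt Real.pi ≠ 0 := by positivity
    have h2 := (h.inv₀ hpi).const_mul (Real.sqrt Real.pi)
    rw [mul_inv_cancel₀ hpi] at h2
    apply h2.congr'
    filter_upwards [Filter.eventually_ge_atTop 1] with n hn
    exact (stirling_factor_eq hn).symm
  have hcC : Tendsto (fun n : ℕ => ((Real.sqrt (2 * Real.pi / n) * (n:ℝ) ^ (n+1)
      * Real.exp (-(n:ℝ)) / (n.factorial : ℝ) : ℝ) : ℂ)) atTop (𝓝 (1:ℂ)) := by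
    have h1 := (Complex.continuous_ofReal.tendsto (1:ℝ)).comp hc
    rw [Complex.ofReal_one] at h1
    exact h1
  have hG := tendsto_G hvabs hv1
  have hprod := hcC.mul hG
  rw [one_mul] at hprod
  have hval : u⁻¹ / (1 - u⁻¹) = 1 / (u - 1) := by
    have h1 : u - 1 ≠ 0 := sub_ne_zero.mpr hu1
    have hden : 1 - u⁻¹ ≠ 0 := fun h => hv1 (sub_eq_zero.mp h).symm
    field_simp
  rw [hval] at hprod
  apply hprod.congr'
  filter_upwards [Filter.eventually_ge_atTop 1] with n hn
  exact (heq n hn).symm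
end

section
/- Cauchy transform of exterior harmonic measure of a disc: for every r > 0 and every z ∈ ℂ with |z| > r, (1/(2π))·∫_0^{2π} [(|z|² − r²)/|z − r·e^{iθ}|²] · (z − r·e^{iθ})^{−1} dθ = conj(z)/(|z|² − r²). -/
open Complex Metric

set_option maxHeartbeats 1000000 in
/-- Cauchy transform of exterior harmonic measure of the disc `{|w| < r}`: for `|z| > r`,
`(1/(2π))·∫₀^{2π} [(|z|²−r²)/|z − re^{iθ}|²]·(z − re^{iθ})⁻¹ dθ = z̄/(|z|²−r²)`. -/
theorem cauchy_transform_exterior_harmonic_measure (r : ℝ) (hr : 0 < r)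
    (z : ℂ) (hz : r < ‖z‖) :
    (1 / (2 * (Real.pi : ℂ))) * ∫ θ in (0 : ℝ)..(2 * Real.pi),
        (((‖z‖ ^ 2 - r ^ 2) /
            ‖z - (r : ℂ) * Complex.exp ((θ : ℂ) * Complex.I)‖ ^ 2 : ℝ) : ℂ) /
          (z - (r : ℂ) * Complex.exp ((θ : ℂ) * Complex.I)) =
      (starRingEnd ℂ) z / (((‖z‖ ^ 2 : ℝ) : ℂ) - (r : ℂ) ^ 2) := by
  have hrz : (0:ℝ) < ‖z‖ := hr.trans hz
  have hz0 : z ≠ 0 := by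
    intro h; rw [h] at hrz; simp at hrz
  set c : ℂ := (starRingEnd ℂ) z with hc_def
  have hc0 : c ≠ 0 := by simpa [hc_def] using hz0
  set A : ℂ := ((‖z‖ ^ 2 : ℝ) : ℂ) - (r : ℂ) ^ 2 with hA_def
  have hA0 : A ≠ 0 := by
    have h1 : ‖z‖ ^ 2 - r ^ 2 ≠ 0 := by nlinarith
    have : A = ((‖z‖ ^ 2 - r ^ 2 : ℝ) : ℂ) := by push_cast [hA_def]; ring
    rw [this]
    exact_mod_cast h1
  have hcz : c * z = A + (r:ℂ)^2 := by
    have h1 : z * c = ((‖z‖ ^ 2 : ℝ) : ℂ) := by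
      rw [hc_def, Complex.mul_conj]
      norm_cast
      rw [Complex.sq_norm]
    rw [hA_def]; rw [mul_comm] at h1; rw [h1]; ring
  have hA2 : A = c * z - (r:ℂ)^2 := by rw [hcz]; ring
  set p : ℂ := (r:ℂ)^2 / c with hp_def
  have habsp : ‖p‖ < r := by
    rw [hp_def, norm_div]
    have : ‖(r:ℂ)^2‖ = r^2 := by
      rw [norm_pow, Complex.norm_real, Real.norm_eq_abs, abs_of_pos hr]
    rw [this, hc_def, Complex.norm_conj]
    rw [div_lt_iff₀ hrz]
    nlinarith
  set s : ℂ := c / (Complex.I * A) with hs_def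
  set F : ℂ → ℂ := fun w =>
    (1 / Complex.I) * ((w - z) ^ 2)⁻¹ - s * ((w - z)⁻¹ - (w - p)⁻¹) with hF_def
  -- nonvanishing on the sphere
  have hwz : ∀ w ∈ sphere (0:ℂ) r, w ≠ z := by
    intro w hw h
    rw [mem_sphere_zero_iff_norm] at hw
    rw [h] at hw
    rw [hw] at hz
    exact lt_irrefl _ hz
  have hwp : ∀ w ∈ sphere (0:ℂ) r, w ≠ p := by
    intro w hw h
    rw [mem_sphere_zero_iff_norm] at hw
    rw [h] at hw
    rw [hw] at habsp
    exact lt_irrefl _ habsp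
  -- the three basic circle integrals
  have E1 : (∮ w in C(0, r), ((w - z) ^ 2)⁻¹) = 0 := by
    have h : (fun w : ℂ => ((w - z) ^ 2)⁻¹) = fun w : ℂ => (w - z) ^ (-2 : ℤ) := by
      funext w
      rw [zpow_neg]
      norm_cast
    rw [h]
    exact circleIntegral.integral_sub_zpow_of_ne (by decide) 0 z r
  have E2 : (∮ w in C(0, r), (w - z)⁻¹) = 0 := by
    apply circleIntegral.integral_eq_zero_of_hasDerivWithinAt
      (f := fun w => Complex.log (1 - w / z)) hr.le
    intro w hw
    rw [mem_sphere_zero_iff_norm] at hw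
    have hwlt : ‖-(w / z)‖ < 1 := by
      rw [norm_neg, norm_div, hw]
      rw [div_lt_one hrz]; exact hz
    have hmem : 1 - w / z ∈ Complex.slitPlane := by
      have := Complex.mem_slitPlane_of_norm_lt_one hwlt
      simpa [sub_eq_add_neg] using this
    have hwnez : w - z ≠ 0 := by
      intro h
      have : w = z := sub_eq_zero.mp h
      rw [this] at hw
      rw [hw] at hz; exact lt_irrefl _ hz
    have hd : HasDerivAt (fun w : ℂ => 1 - w / z) (-(1 / z)) w := by
      simpa using ((hasDerivAt_id w).div_const z).const_sub 1
    have := (Complex.hasDerivAt_log hmem).comp w hd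
    have hne : w ≠ z := sub_ne_zero.mp hwnez
    have heq : (1 - w / z)⁻¹ * -(1 / z) = (w - z)⁻¹ := by
      field_simp [hz0, sub_ne_zero.mpr hne, sub_ne_zero.mpr hne.symm]
      ring
    rw [heq] at this
    exact this.hasDerivWithinAt
  have E3 : (∮ w in C(0, r), (w - p)⁻¹) = 2 * Real.pi * Complex.I := by
    apply circleIntegral.integral_sub_inv_of_mem_ball
    rw [mem_ball_zero_iff]
    exact habsp
  -- integrability
  have hint1 : CircleIntegrable (fun w => (1 / Complex.I) * ((w - z) ^ 2)⁻¹) 0 r := by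
    apply ContinuousOn.circleIntegrable hr.le
    apply continuousOn_const.mul
    apply ContinuousOn.inv₀ (Continuous.continuousOn (by continuity))
    intro w hw
    exact pow_ne_zero 2 (sub_ne_zero.mpr (hwz w hw))
  have hint2 : CircleIntegrable (fun w => (w - z)⁻¹) 0 r := by
    apply ContinuousOn.circleIntegrable hr.le
    apply ContinuousOn.inv₀ (Continuous.continuousOn (by continuity))
    intro w hw
    exact sub_ne_zero.mpr (hwz w hw)
  have hint3 : CircleIntegrable (fun w => (w - p)⁻¹) 0 r := by
    apply ContinuousOn.circleIntegrable hr.le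
    apply ContinuousOn.inv₀ (Continuous.continuousOn (by continuity))
    intro w hw
    exact sub_ne_zero.mpr (hwp w hw)
  have hint23 : CircleIntegrable (fun w => s * ((w - z)⁻¹ - (w - p)⁻¹)) 0 r := by
    apply ContinuousOn.circleIntegrable hr.le
    apply continuousOn_const.mul
    apply ContinuousOn.sub
    · apply ContinuousOn.inv₀ (Continuous.continuousOn (by continuity))
      intro w hw; exact sub_ne_zero.mpr (hwz w hw)
    · apply ContinuousOn.inv₀ (Continuous.continuousOn (by continuity))
      intro w hw; exact sub_ne_zero.mpr (hwp w hw)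
  -- compute ∮ F
  have hFint : (∮ w in C(0, r), F w) = 2 * Real.pi * c / A := by
    rw [hF_def]
    rw [circleIntegral.integral_sub hint1 hint23]
    rw [circleIntegral.integral_const_mul, circleIntegral.integral_const_mul]
    rw [circleIntegral.integral_sub hint2 hint3]
    rw [E1, E2, E3, hs_def]
    field_simp
    ring
  -- identify the interval integral with ∮ F
  have hkey : (∫ θ in (0 : ℝ)..(2 * Real.pi),
        (((‖z‖ ^ 2 - r ^ 2) /
            ‖z - (r : ℂ) * Complex.exp ((θ : ℂ) * Complex.I)‖ ^ 2 : ℝ) : ℂ) /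
          (z - (r : ℂ) * Complex.exp ((θ : ℂ) * Complex.I)))
      = ∮ w in C(0, r), F w := by
    rw [circleIntegral]
    apply intervalIntegral.integral_congr
    intro θ _
    simp only [deriv_circleMap, circleMap, zero_add, smul_eq_mul]
    set w : ℂ := (r : ℂ) * Complex.exp ((θ : ℂ) * Complex.I) with hw_def
    have habsw : ‖w‖ = r := by
      rw [hw_def, norm_mul, Complex.norm_exp_ofReal_mul_I, Complex.norm_real,
        Real.norm_eq_abs, abs_of_pos hr, mul_one]
    have hw0 : w ≠ 0 := by
      intro h; rw [h] at habsw; simp at habsw; exact hr.ne' habsw.symm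
    have hzw : z - w ≠ 0 := by
      intro h
      have : z = w := sub_eq_zero.mp h
      rw [this, habsw] at hz; exact lt_irrefl _ hz
    have hwzne : w - z ≠ 0 := fun h => hzw (by rw [← neg_sub] at h; simpa using neg_eq_zero.mp h)
    have hcw : (starRingEnd ℂ) w = (r:ℂ)^2 / w := by
      rw [eq_div_iff hw0]
      have h1 : w * (starRingEnd ℂ) w = (((r:ℝ)^2 : ℝ) : ℂ) := by
        rw [Complex.mul_conj]
        norm_cast
        rw [Complex.normSq_eq_norm_sq, habsw]
      rw [mul_comm] at h1
      rw [h1]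
      norm_cast
    have hwp' : w - p ≠ 0 := by
      intro h
      have : w = p := sub_eq_zero.mp h
      rw [this] at habsw
      rw [habsw] at habsp
      exact lt_irrefl _ habsp
    have hcwr : c - (r:ℂ)^2 / w ≠ 0 := by
      intro h
      have h2 : c = (r:ℂ)^2 / w := by linear_combination h
      have : ‖c‖ = ‖(r:ℂ)^2 / w‖ := by rw [h2]
      rw [hc_def, Complex.norm_conj, norm_div, habsw] at this
      have h3 : ‖(r:ℂ)^2‖ = r^2 := by
        rw [norm_pow, Complex.norm_real, Real.norm_eq_abs, abs_of_pos hr]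
      rw [h3, eq_div_iff hr.ne'] at this
      nlinarith
    -- cast rewriting
    have hnum : (((‖z‖ ^ 2 - r ^ 2 : ℝ)) : ℂ) = A := by
      rw [hA_def]; push_cast; ring
    have hden : ((‖z - w‖ ^ 2 : ℝ) : ℂ) = (z - w) * (c - (r:ℂ)^2 / w) := by
      have h1 : (z - w) * (starRingEnd ℂ) (z - w) = ((Complex.normSq (z - w) : ℝ) : ℂ) :=
        Complex.mul_conj (z - w)
      have h2 : (starRingEnd ℂ) (z - w) = c - (r:ℂ)^2 / w := by
        rw [map_sub, hcw, hc_def]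
      rw [← h2, h1, Complex.normSq_eq_norm_sq]
    have hwp2 : w - (r:ℂ)^2 / c ≠ 0 := by rw [← hp_def]; exact hwp'
    clear_value w F s p A c
    have hA0' : c * z - (r:ℂ)^2 ≠ 0 := by rw [← hA2]; exact hA0
    have hD : c * w - (r:ℂ)^2 ≠ 0 := by
      intro h
      apply hcwr
      rw [sub_eq_zero] at h ⊢
      rw [← h]
      field_simp
    have e1 : c - (r:ℂ)^2 / w = (c * w - (r:ℂ)^2) / w := by field_simp
    have e2 : w - (r:ℂ)^2 / c = (c * w - (r:ℂ)^2) / c := by field_simp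
    rw [Complex.ofReal_div, hnum, hden]
    simp only [hF_def, hs_def, hp_def]
    rw [hA2, e1, e2]
    have hI3 : Complex.I ^ 3 = -Complex.I := by
      rw [pow_succ, Complex.I_sq]; ring
    field_simp [hw0, hzw, hwzne, hc0, hD, hA0', Complex.I_ne_zero]
    ring_nf
  rw [hkey, hFint]
  have hpi : (Real.pi : ℂ) ≠ 0 := by exact_mod_cast Real.pi_ne_zero
  field_simp
end

section
/- Monotonicity gap of Ginibre obstacle functions: for all real numbers τ, τ′ with 0 < τ ≤ τ′ ≤ 1 and all real x ≥ τ′, one has (τ′·log(x/τ′) + τ′) − (τ·log(x/τ) + τ) ≥ (τ′ − τ)²/2. Equivalently, for the Ginibre potential Q(z) = |z|², the obstacle functions satisfy Q̌_{τ′}(z) − Q̌_τ(z) ≥ (τ′ − τ)²/2 for all z with |z|² ≥ τ′. -/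
lemma ginibre_aux_mono (τ : ℝ) (h0 : 0 < τ) :
    MonotoneOn (fun s : ℝ => s - τ - τ * Real.log (s / τ) - (s - τ) ^ 2 / 2)
      (Set.Icc τ 1) := by
  have hconv : Convex ℝ (Set.Icc τ (1:ℝ)) := convex_Icc _ _
  apply monotoneOn_of_deriv_nonneg hconv
  · apply ContinuousOn.sub
    apply ContinuousOn.sub
    · exact (continuous_id.sub continuous_const).continuousOn
    · apply ContinuousOn.mul continuousOn_const
      apply ContinuousOn.log
      · exact (continuous_id.div_const τ).continuousOn
      · intro s hs
        have : 0 < s := lt_of_lt_of_le h0 hs.1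
        positivity
    · exact (((continuous_id.sub continuous_const).pow 2).div_const 2).continuousOn
  · intro s hs
    rw [interior_Icc] at hs
    have hs0 : 0 < s := lt_trans h0 hs.1
    have hd1 : HasDerivAt (fun s : ℝ => s / τ) (1 / τ) s := by
      simpa using (hasDerivAt_id s).div_const τ
    have hd2 : HasDerivAt (fun s : ℝ => Real.log (s / τ)) ((1 / τ) / (s / τ)) s :=
      hd1.log (by positivity)
    have hd3 : HasDerivAt (fun s : ℝ => (s - τ) ^ 2)
        (2 * (s - τ) ^ 1 * 1) s := by
      exact (((hasDerivAt_id s).sub_const τ).pow 2)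
    have hd : HasDerivAt (fun s : ℝ => s - τ - τ * Real.log (s / τ) - (s - τ) ^ 2 / 2)
        (1 - τ * ((1 / τ) / (s / τ)) - (2 * (s - τ) ^ 1 * 1) / 2) s := by
      exact (((hasDerivAt_id s).sub_const τ).sub (hd2.const_mul τ)).sub (hd3.div_const 2)
    exact (hd.differentiableAt).differentiableWithinAt
  · intro s hs
    rw [interior_Icc] at hs
    have hs0 : 0 < s := lt_trans h0 hs.1
    have hd1 : HasDerivAt (fun s : ℝ => s / τ) (1 / τ) s := by
      simpa using (hasDerivAt_id s).div_const τ
    have hd2 : HasDerivAt (fun s : ℝ => Real.log (s / τ)) ((1 / τ) / (s / τ)) s :=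
      hd1.log (by positivity)
    have hd3 : HasDerivAt (fun s : ℝ => (s - τ) ^ 2)
        (2 * (s - τ) ^ 1 * 1) s := by
      exact (((hasDerivAt_id s).sub_const τ).pow 2)
    have hd : HasDerivAt (fun s : ℝ => s - τ - τ * Real.log (s / τ) - (s - τ) ^ 2 / 2)
        (1 - τ * ((1 / τ) / (s / τ)) - (2 * (s - τ) ^ 1 * 1) / 2) s := by
      exact (((hasDerivAt_id s).sub_const τ).sub (hd2.const_mul τ)).sub (hd3.div_const 2)
    rw [hd.deriv]
    have hval : τ * ((1 / τ) / (s / τ)) = τ / s := by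
      field_simp
    rw [hval]
    have hts : τ / s * s = τ := div_mul_cancel₀ τ hs0.ne'
    nlinarith [hts, hs0, hs.1, hs.2,
      mul_nonneg (sub_nonneg.2 hs.1.le) (sub_nonneg.2 hs.2.le)]

/-- Monotonicity gap of Ginibre obstacle functions: for `0 < τ ≤ τ' ≤ 1` and `x ≥ τ'`,
`(τ'·log(x/τ') + τ') − (τ·log(x/τ) + τ) ≥ (τ' − τ)²/2`.  (With `x = |z|²`, this says
`Q̌_{τ'}(z) − Q̌_τ(z) ≥ (τ' − τ)²/2` on the closed exterior of the `τ'`-droplet.) -/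
theorem ginibre_obstacle_function_gap (τ τ' : ℝ) (h0 : 0 < τ) (h1 : τ ≤ τ') (h2 : τ' ≤ 1)
    (x : ℝ) (hx : τ' ≤ x) :
    (τ' * Real.log (x / τ') + τ') - (τ * Real.log (x / τ) + τ) ≥ (τ' - τ) ^ 2 / 2 := by
  have hτ' : 0 < τ' := lt_of_lt_of_le h0 h1
  have hx0 : 0 < x := lt_of_lt_of_le hτ' hx
  have hmono := ginibre_aux_mono τ h0 (Set.mem_Icc.2 ⟨le_refl τ, le_trans h1 h2⟩)
    (Set.mem_Icc.2 ⟨h1, h2⟩) h1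
  simp only [div_self h0.ne', Real.log_one] at hmono
  -- hmono : τ - τ - τ*0 - 0 ≤ τ' - τ - τ * log (τ'/τ) - (τ'-τ)^2/2
  have hlog : Real.log τ' ≤ Real.log x := Real.log_le_log hτ' hx
  have hprod : 0 ≤ (τ' - τ) * (Real.log x - Real.log τ') :=
    mul_nonneg (by linarith) (by linarith)
  rw [Real.log_div hx0.ne' hτ'.ne', Real.log_div hx0.ne' h0.ne']
  rw [Real.log_div hτ'.ne' h0.ne'] at hmono
  nlinarith [hmono, hprod]
end
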